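/- arXiv:2106.10503 — 11 statements merged into one kernel-verified Lean document; each statement's English description precedes it below -/
import Mathlib

section
/- For all a, b > 0, the RSB density satisfies lim_{u→∞} u · (log u)^{1+b} · π_RSB(u; a, b) = 1/B(a,b); in particular the tail of π_RSB(·; a, b) is asymptotically equivalent to u^{-1}(log u)^{-(1+b)}/B(a,b). -/
open MeasureTheory Set Filter

/-- The Beta function `B(a,b) = Γ(a)Γ(b)/Γ(a+b)`. -/
noncomputable def betaFn (a b : ℝ) : ℝ :=
  Real.Gamma a * Real.Gamma b / Real.Gamma (a + b)

/-- The rescaled beta (RSB) density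
`π_RSB(u; a, b) = (1/B(a,b)) (log(1+u))^{a-1} (1+u)^{-1} (1+log(1+u))^{-(a+b)}`. -/
noncomputable def piRSB (a b u : ℝ) : ℝ :=
  (1 / betaFn a b) * (Real.log (1 + u)) ^ (a - 1) * (1 + u)⁻¹ *
    (1 + Real.log (1 + u)) ^ (-(a + b))

/-- Auxiliary: `x/(1+x) → 1` as `x → ∞`. -/
lemma aux_div_one_add : Filter.Tendsto (fun x : ℝ => x / (1 + x)) atTop (nhds 1) := by
  have h : Filter.Tendsto (fun x : ℝ => 1 - (1 + x)⁻¹) atTop (nhds 1) := by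
    have := (tendsto_inv_atTop_zero (𝕜 := ℝ)).comp (tendsto_atTop_add_const_left atTop 1 tendsto_id)
    simpa using tendsto_const_nhds.sub this
  refine h.congr' ?_
  filter_upwards [eventually_gt_atTop (0:ℝ)] with x hx
  have h1 : (1 + x) ≠ 0 := by positivity
  field_simp
  ring

/-- For all `a, b > 0`, `u (log u)^{1+b} π_RSB(u; a, b) → 1/B(a,b)` as `u → ∞`;
i.e. the tail of the RSB density is asymptotically `u⁻¹ (log u)^{-(1+b)} / B(a,b)`. -/
theorem rsb_tail_asymptotics (a b : ℝ) (ha : 0 < a) (hb : 0 < b) :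
    Filter.Tendsto (fun u : ℝ => u * (Real.log u) ^ (1 + b) * piRSB a b u)
      Filter.atTop (nhds (1 / betaFn a b)) := by
  set C := 1 / betaFn a b with hC
  have hLtop : Filter.Tendsto (fun u : ℝ => Real.log (1 + u)) atTop atTop :=
    Real.tendsto_log_atTop.comp (tendsto_atTop_add_const_left atTop 1 tendsto_id)
  -- factor limits
  have h1 : Filter.Tendsto (fun u : ℝ => u * (1 + u)⁻¹) atTop (nhds 1) := by
    simpa [div_eq_mul_inv] using aux_div_one_add
  have h3 : Filter.Tendsto (fun u : ℝ => Real.log (1 + u) / (1 + Real.log (1 + u)))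
      atTop (nhds 1) := aux_div_one_add.comp hLtop
  have h2 : Filter.Tendsto (fun u : ℝ => Real.log u / Real.log (1 + u)) atTop (nhds 1) := by
    have hratio : Filter.Tendsto (fun u : ℝ => Real.log ((1 + u) / u)) atTop (nhds 0) := by
      have hq : Filter.Tendsto (fun u : ℝ => (1 + u) / u) atTop (nhds 1) := by
        have h := tendsto_inv_atTop_zero (𝕜 := ℝ)
        have : Filter.Tendsto (fun u : ℝ => u⁻¹ + 1) atTop (nhds 1) := by
          simpa using h.add tendsto_const_nhds
        refine this.congr' ?_
        filter_upwards [eventually_gt_atTop (0:ℝ)] with u hu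
        field_simp
      have := (Real.continuousAt_log (by norm_num : (1:ℝ) ≠ 0)).tendsto.comp hq
      simpa [Function.comp_def] using this
    have hinv : Filter.Tendsto (fun u : ℝ => (Real.log (1 + u))⁻¹) atTop (nhds 0) :=
      hLtop.inv_tendsto_atTop
    have hmain : Filter.Tendsto
        (fun u : ℝ => 1 - Real.log ((1 + u) / u) * (Real.log (1 + u))⁻¹) atTop (nhds 1) := by
      simpa using tendsto_const_nhds.sub (hratio.mul hinv)
    refine hmain.congr' ?_
    filter_upwards [eventually_ge_atTop (2:ℝ)] with u hu
    have hu0 : (0:ℝ) < u := by linarith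
    have h1u : (0:ℝ) < 1 + u := by linarith
    have hL : 0 < Real.log (1 + u) := Real.log_pos (by linarith)
    rw [Real.log_div (by positivity) (by positivity)]
    field_simp
    ring
  -- the rewritten form
  have hmain : Filter.Tendsto
      (fun u : ℝ => C * (u * (1 + u)⁻¹) * (Real.log u / Real.log (1 + u)) ^ (1 + b) *
        (Real.log (1 + u) / (1 + Real.log (1 + u))) ^ (a + b)) atTop (nhds C) := by
    have t2 : Filter.Tendsto (fun u : ℝ => (Real.log u / Real.log (1 + u)) ^ (1 + b))
        atTop (nhds 1) := by
      have := h2.rpow_const (p := 1 + b) (Or.inl one_ne_zero)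
      simpa using this
    have t3 : Filter.Tendsto (fun u : ℝ => (Real.log (1 + u) / (1 + Real.log (1 + u))) ^ (a + b))
        atTop (nhds 1) := by
      have := h3.rpow_const (p := a + b) (Or.inl one_ne_zero)
      simpa using this
    have := ((tendsto_const_nhds (x := C)).mul h1).mul t2 |>.mul t3
    simpa using this
  refine hmain.congr' ?_
  filter_upwards [eventually_ge_atTop (2:ℝ)] with u hu
  have hu0 : (0:ℝ) < u := by linarith
  have h1u : (0:ℝ) < 1 + u := by linarith
  have hx : 0 < Real.log u := Real.log_pos (by linarith)
  have hL : 0 < Real.log (1 + u) := Real.log_pos (by linarith)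
  have h1L : 0 < 1 + Real.log (1 + u) := by linarith
  set x := Real.log u
  set L := Real.log (1 + u)
  show C * (u * (1 + u)⁻¹) * (x / L) ^ (1 + b) * (L / (1 + L)) ^ (a + b) =
      u * x ^ (1 + b) * piRSB a b u
  rw [piRSB, ← hC, Real.div_rpow hx.le hL.le, Real.div_rpow hL.le h1L.le,
    Real.rpow_neg h1L.le]
  have hLab : L ^ (a - 1) = L ^ (a + b) / L ^ (1 + b) := by
    rw [← Real.rpow_sub hL]; ring_nf
  rw [hLab]
  have hne1 : L ^ (1 + b) ≠ 0 := by positivity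
  have hne2 : (1 + L) ^ (a + b) ≠ 0 := by positivity
  field_simp
end

section
/- (Theorem 1) For all a ∈ (0,1), b > 0, and u > 0, the RSB density has the integral expression π_RSB(u; a, b) = (1/B(a,b)) ∫₀^∞ ∫₀^∞ ∫₀^∞ e^{-v u} · (v^{x+y} e^{-v} / Γ(x+y+1)) · (x^{-a} / Γ(1-a)) · (y^{a+b-1} e^{-y} / Γ(a+b)) dv dx dy; equivalently, π_RSB(u; a, b) = ∫₀^∞ ∫₀^∞ ∫₀^∞ v e^{-v u} · (v^{x+y-1} e^{-v} / Γ(x+y)) · g(x,y) dv dx dy with g(x,y) = x^{-a} y^{a+b-1} e^{-y} / (B(a,b) Γ(1-a) Γ(a+b) (x+y)). -/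
open MeasureTheory Set Filter

/-- The joint density `g(x,y)` of the latent pair in Theorem 1. -/
noncomputable def gLatent (a b x y : ℝ) : ℝ :=
  x ^ (-a) * y ^ (a + b - 1) * Real.exp (-y) /
    (betaFn a b * Real.Gamma (1 - a) * Real.Gamma (a + b) * (x + y))

lemma rsb_gamma_aux (s r K : ℝ) (hs : 0 < s) (hr : 0 < r) :
    ∫ v in Set.Ioi (0:ℝ), v ^ (s-1) * Real.exp (-(r*v)) * K
      = (1/r)^s * Real.Gamma s * K := by
  rw [integral_mul_const, Real.integral_rpow_mul_exp_neg_mul_Ioi hs hr]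

/-- (Theorem 1) For `a ∈ (0,1)`, `b > 0`, `u > 0`, the RSB density has the
triple-integral (mixture-of-exponentials) representation. -/
theorem rsb_integral_representation (a b u : ℝ) (ha : a ∈ Set.Ioo (0 : ℝ) 1)
    (hb : 0 < b) (hu : 0 < u) :
    (piRSB a b u
      = (1 / betaFn a b) *
          ∫ y in Set.Ioi (0 : ℝ), ∫ x in Set.Ioi (0 : ℝ), ∫ v in Set.Ioi (0 : ℝ),
            Real.exp (-(v * u)) * (v ^ (x + y) * Real.exp (-v) / Real.Gamma (x + y + 1)) *
              (x ^ (-a) / Real.Gamma (1 - a)) *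
              (y ^ (a + b - 1) * Real.exp (-y) / Real.Gamma (a + b)))
    ∧ (piRSB a b u
      = ∫ y in Set.Ioi (0 : ℝ), ∫ x in Set.Ioi (0 : ℝ), ∫ v in Set.Ioi (0 : ℝ),
          v * Real.exp (-(v * u)) * (v ^ (x + y - 1) * Real.exp (-v) / Real.Gamma (x + y)) *
            gLatent a b x y) := by
  obtain ⟨ha0, ha1⟩ := ha
  have hu1 : (0:ℝ) < 1 + u := by linarith
  set L := Real.log (1 + u) with hLdef
  have hL : 0 < L := Real.log_pos (by linarith)
  have h1L : (0:ℝ) < 1 + L := by linarith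
  have hGa : 0 < Real.Gamma (1 - a) := Real.Gamma_pos_of_pos (by linarith)
  have hGab : 0 < Real.Gamma (a + b) := Real.Gamma_pos_of_pos (by linarith)
  have hB : 0 < betaFn a b := by
    have := Real.Gamma_pos_of_pos ha0
    have := Real.Gamma_pos_of_pos hb
    unfold betaFn; positivity
  -- inner v-integral
  have hstep1 : ∀ y ∈ Set.Ioi (0:ℝ), ∀ x ∈ Set.Ioi (0:ℝ),
      (∫ v in Set.Ioi (0 : ℝ),
        Real.exp (-(v * u)) * (v ^ (x + y) * Real.exp (-v) / Real.Gamma (x + y + 1)) *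
          (x ^ (-a) / Real.Gamma (1 - a)) *
          (y ^ (a + b - 1) * Real.exp (-y) / Real.Gamma (a + b)))
      = (1/(1+u)) ^ (x + y + 1) * (x ^ (-a) / Real.Gamma (1 - a)) *
          (y ^ (a + b - 1) * Real.exp (-y) / Real.Gamma (a + b)) := by
    intro y hy x hx
    simp only [Set.mem_Ioi] at hx hy
    have hxy1 : 0 < x + y + 1 := by linarith
    have hGxy1 : 0 < Real.Gamma (x + y + 1) := Real.Gamma_pos_of_pos hxy1
    rw [setIntegral_congr_fun measurableSet_Ioi
      (g := fun v => v ^ (x + y + 1 - 1) * Real.exp (-((1+u)*v)) *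
        ((x ^ (-a) / Real.Gamma (1 - a)) *
          (y ^ (a + b - 1) * Real.exp (-y) / Real.Gamma (a + b)) / Real.Gamma (x + y + 1)))
      (fun v hv => by
        beta_reduce
        rw [show x + y + 1 - 1 = x + y by ring,
          show -((1+u)*v) = -(v*u) + -v by ring, Real.exp_add]
        ring),
      rsb_gamma_aux _ _ _ hxy1 hu1]
    field_simp
  -- x-integral
  have hstep2 : ∀ y ∈ Set.Ioi (0:ℝ),
      (∫ x in Set.Ioi (0 : ℝ),
        (1/(1+u)) ^ (x + y + 1) * (x ^ (-a) / Real.Gamma (1 - a)) *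
          (y ^ (a + b - 1) * Real.exp (-y) / Real.Gamma (a + b)))
      = (1/L) ^ (1 - a) * (1/(1+u)) ^ (y + 1) *
          (y ^ (a + b - 1) * Real.exp (-y) / Real.Gamma (a + b)) := by
    intro y hy
    simp only [Set.mem_Ioi] at hy
    have h1a : 0 < 1 - a := by linarith
    rw [setIntegral_congr_fun measurableSet_Ioi
      (g := fun x => x ^ (1 - a - 1) * Real.exp (-(L*x)) *
        ((1/(1+u)) ^ (y + 1) *
          (y ^ (a + b - 1) * Real.exp (-y) / Real.Gamma (a + b)) / Real.Gamma (1 - a)))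
      (fun x hx => by
        dsimp only
        have hx' : (0:ℝ) < x := hx
        have e1 : (1/(1+u) : ℝ) ^ (x + y + 1) = (1/(1+u)) ^ x * (1/(1+u)) ^ (y+1) := by
          rw [← Real.rpow_add (by positivity)]; ring_nf
        have e2 : (1/(1+u) : ℝ) ^ x = Real.exp (-(L*x)) := by
          rw [Real.rpow_def_of_pos (by positivity), one_div, Real.log_inv, hLdef]
          ring_nf
        rw [e1, e2, show 1 - a - 1 = -a by ring]
        ring),
      rsb_gamma_aux _ _ _ h1a hL]
    field_simp
  -- y-integral
  have hstep3 :
      (∫ y in Set.Ioi (0 : ℝ),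
        (1/L) ^ (1 - a) * (1/(1+u)) ^ (y + 1) *
          (y ^ (a + b - 1) * Real.exp (-y) / Real.Gamma (a + b)))
      = (1/(1+L)) ^ (a + b) * (1/L) ^ (1 - a) * (1+u)⁻¹ := by
    have hab : 0 < a + b := by linarith
    rw [setIntegral_congr_fun measurableSet_Ioi
      (g := fun y => y ^ (a + b - 1) * Real.exp (-((1+L)*y)) *
        ((1/L) ^ (1 - a) * (1+u)⁻¹ / Real.Gamma (a + b)))
      (fun y hy => by
        dsimp only
        have hy' : (0:ℝ) < y := hy
        have e1 : (1/(1+u) : ℝ) ^ (y + 1) = (1/(1+u)) ^ y * (1+u)⁻¹ := by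
          rw [Real.rpow_add (by positivity), Real.rpow_one, one_div]
        have e2 : (1/(1+u) : ℝ) ^ y = Real.exp (-(L*y)) := by
          rw [Real.rpow_def_of_pos (by positivity), one_div, Real.log_inv, hLdef]
          ring_nf
        have e3 : Real.exp (-(L*y)) * Real.exp (-y) = Real.exp (-((1+L)*y)) := by
          rw [← Real.exp_add]; ring_nf
        rw [e1, e2, ← e3]
        ring),
      rsb_gamma_aux _ _ _ hab h1L]
    field_simp
  -- value of the first triple integral
  have hval : (∫ y in Set.Ioi (0 : ℝ), ∫ x in Set.Ioi (0 : ℝ), ∫ v in Set.Ioi (0 : ℝ),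
      Real.exp (-(v * u)) * (v ^ (x + y) * Real.exp (-v) / Real.Gamma (x + y + 1)) *
        (x ^ (-a) / Real.Gamma (1 - a)) *
        (y ^ (a + b - 1) * Real.exp (-y) / Real.Gamma (a + b)))
      = (1/(1+L)) ^ (a + b) * (1/L) ^ (1 - a) * (1+u)⁻¹ := by
    rw [setIntegral_congr_fun measurableSet_Ioi (fun y hy =>
      (setIntegral_congr_fun measurableSet_Ioi (fun x hx => hstep1 y hy x hx)).trans
        (hstep2 y hy))]
    exact hstep3
  have hrw : (1/(1+L) : ℝ) ^ (a + b) * (1/L) ^ (1 - a) * (1+u)⁻¹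
      = L ^ (a - 1) * (1+u)⁻¹ * (1 + L) ^ (-(a + b)) := by
    rw [one_div, one_div, Real.inv_rpow hL.le, Real.inv_rpow h1L.le,
      ← Real.rpow_neg hL.le, ← Real.rpow_neg h1L.le, show -(1-a) = a - 1 by ring]
    ring
  have hfirst : piRSB a b u
      = (1 / betaFn a b) *
          ∫ y in Set.Ioi (0 : ℝ), ∫ x in Set.Ioi (0 : ℝ), ∫ v in Set.Ioi (0 : ℝ),
            Real.exp (-(v * u)) * (v ^ (x + y) * Real.exp (-v) / Real.Gamma (x + y + 1)) *
              (x ^ (-a) / Real.Gamma (1 - a)) *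
              (y ^ (a + b - 1) * Real.exp (-y) / Real.Gamma (a + b)) := by
    rw [hval, hrw, piRSB, ← hLdef]
    ring
  refine ⟨hfirst, ?_⟩
  -- second representation: integrands agree up to the factor `(betaFn a b)⁻¹`
  have hcongr : (∫ y in Set.Ioi (0 : ℝ), ∫ x in Set.Ioi (0 : ℝ), ∫ v in Set.Ioi (0 : ℝ),
      v * Real.exp (-(v * u)) * (v ^ (x + y - 1) * Real.exp (-v) / Real.Gamma (x + y)) *
        gLatent a b x y)
      = ∫ y in Set.Ioi (0 : ℝ), ∫ x in Set.Ioi (0 : ℝ), ∫ v in Set.Ioi (0 : ℝ),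
          (betaFn a b)⁻¹ *
          (Real.exp (-(v * u)) * (v ^ (x + y) * Real.exp (-v) / Real.Gamma (x + y + 1)) *
            (x ^ (-a) / Real.Gamma (1 - a)) *
            (y ^ (a + b - 1) * Real.exp (-y) / Real.Gamma (a + b))) := by
    refine setIntegral_congr_fun measurableSet_Ioi (fun y hy => ?_)
    refine setIntegral_congr_fun measurableSet_Ioi (fun x hx => ?_)
    refine setIntegral_congr_fun measurableSet_Ioi (fun v hv => ?_)
    have hy' : (0:ℝ) < y := hy
    have hx' : (0:ℝ) < x := hx
    have hv' : (0:ℝ) < v := hv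
    have hxy : 0 < x + y := by linarith
    have hGxy : 0 < Real.Gamma (x + y) := Real.Gamma_pos_of_pos hxy
    have hG1 : Real.Gamma (x + y + 1) = (x + y) * Real.Gamma (x + y) := by
      rw [Real.Gamma_add_one hxy.ne']
    have hvpow : v ^ (x + y) = v * v ^ (x + y - 1) := by
      nth_rewrite 1 [show x + y = 1 + (x + y - 1) by ring]
      rw [Real.rpow_add hv', Real.rpow_one]
    rw [gLatent, hG1, hvpow]
    field_simp
  rw [hcongr]
  simp_rw [integral_const_mul]
  rw [hfirst, one_div]
end

section
/- For all a ∈ (0,1), b > 0, and all u, v, x, y > 0, the following pointwise factorization identity holds: v e^{-v u} · (v^{x+y-1} e^{-v} / Γ(x+y)) · g(x,y) = π_RSB(u; a, b) · ((1+u)^{x+y+1} v^{x+y} e^{-(1+u)v} / Γ(x+y+1)) · ((log(1+u))^{1-a} x^{-a} e^{-x log(1+u)} / Γ(1-a)) · ((1+log(1+u))^{a+b} y^{a+b-1} e^{-(1+log(1+u)) y} / Γ(a+b)), where g(x,y) = x^{-a} y^{a+b-1} e^{-y} / (B(a,b) Γ(1-a) Γ(a+b) (x+y)). (This identity expresses the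 full conditional distribution of the latent variables (v,x,y) given u as a product of three Gamma densities.) -/
open MeasureTheory Set Filter

/-- The pointwise factorization of the joint density of `(u, v, x, y)` as the RSB
marginal of `u` times three Gamma densities: the full conditional of `(v,x,y)`
given `u` is `Ga(x+y+1, 1+u) × Ga(1-a, log(1+u)) × Ga(a+b, 1+log(1+u))`. -/
theorem rsb_latent_factorization (a b u v x y : ℝ) (ha : a ∈ Set.Ioo (0 : ℝ) 1)
    (hb : 0 < b) (hu : 0 < u) (hv : 0 < v) (hx : 0 < x) (hy : 0 < y) :
    v * Real.exp (-(v * u)) * (v ^ (x + y - 1) * Real.exp (-v) / Real.Gamma (x + y)) *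
        gLatent a b x y
      = piRSB a b u *
          ((1 + u) ^ (x + y + 1) * v ^ (x + y) * Real.exp (-((1 + u) * v)) /
            Real.Gamma (x + y + 1)) *
          ((Real.log (1 + u)) ^ (1 - a) * x ^ (-a) * Real.exp (-(x * Real.log (1 + u))) /
            Real.Gamma (1 - a)) *
          ((1 + Real.log (1 + u)) ^ (a + b) * y ^ (a + b - 1) *
            Real.exp (-((1 + Real.log (1 + u)) * y)) / Real.Gamma (a + b)) := by
  obtain ⟨ha0, ha1⟩ := ha
  set L := Real.log (1 + u) with hLdef
  have h1u : (0:ℝ) < 1 + u := by linarith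
  have hL : 0 < L := Real.log_pos (by linarith)
  have h1L : (0:ℝ) < 1 + L := by linarith
  have hxy : (0:ℝ) < x + y := by linarith
  have hGxy : 0 < Real.Gamma (x + y) := Real.Gamma_pos_of_pos hxy
  have hG1a : 0 < Real.Gamma (1 - a) := Real.Gamma_pos_of_pos (by linarith)
  have hGab : 0 < Real.Gamma (a + b) := Real.Gamma_pos_of_pos (by linarith)
  have hGa : 0 < Real.Gamma a := Real.Gamma_pos_of_pos ha0
  have hGb : 0 < Real.Gamma b := Real.Gamma_pos_of_pos hb
  have hB : betaFn a b ≠ 0 := by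
    unfold betaFn; positivity
  have hGadd : Real.Gamma (x + y + 1) = (x + y) * Real.Gamma (x + y) :=
    Real.Gamma_add_one hxy.ne'
  have e1 : (1 + u) ^ (x + y + 1) = Real.exp ((x + y) * L) * (1 + u) := by
    rw [Real.rpow_add_one h1u.ne', Real.rpow_def_of_pos h1u, ← hLdef, mul_comm L]
  have e2 : v ^ (x + y) = v ^ (x + y - 1) * v := by
    rw [← Real.rpow_add_one hv.ne']; ring_nf
  have e3 : L ^ (a - 1) * L ^ (1 - a) = 1 := by
    rw [← Real.rpow_add hL]; norm_num
  have e4 : (1 + L) ^ (-b + -a) * (1 + L) ^ (a + b) = 1 := by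
    rw [← Real.rpow_add h1L, show -b + -a + (a + b) = 0 by ring, Real.rpow_zero]
  have e5 : Real.exp (-((1 + u) * v)) = Real.exp (-(v * u)) * Real.exp (-v) := by
    rw [← Real.exp_add]; ring_nf
  have e6 : Real.exp ((x + y) * L) * Real.exp (-(x * L)) * Real.exp (-((1 + L) * y))
      = Real.exp (-y) := by
    rw [← Real.exp_add, ← Real.exp_add]; ring_nf
  have E : L ^ (a - 1) * (1 + L) ^ (-b + -a) * L ^ (1 - a) * (1 + L) ^ (a + b) *
      (Real.exp ((x + y) * L) * Real.exp (-(x * L)) * Real.exp (-((1 + L) * y)))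
      = Real.exp (-y) := by
    calc L ^ (a - 1) * (1 + L) ^ (-b + -a) * L ^ (1 - a) * (1 + L) ^ (a + b) *
        (Real.exp ((x + y) * L) * Real.exp (-(x * L)) * Real.exp (-((1 + L) * y)))
        = (L ^ (a - 1) * L ^ (1 - a)) * ((1 + L) ^ (-b + -a) * (1 + L) ^ (a + b)) *
          (Real.exp ((x + y) * L) * Real.exp (-(x * L)) * Real.exp (-((1 + L) * y))) := by
          ring
      _ = Real.exp (-y) := by rw [e3, e4, e6]; ring
  unfold piRSB gLatent
  rw [hGadd, e1, e2, e5, ← hLdef]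
  field_simp
  rw [show -(a + b) = -b + -a by ring, show y * (1 + L) = (1 + L) * y by ring]
  linear_combination -E
end

section
/- For all a ∈ (0,1), b > 0, and u > 0, the RSB density is the marginal of the hierarchical model u|v ~ Exponential(v), v|z ~ Gamma(z,1), z|w ~ Gamma(b,w), w ~ Beta(a, 1-a): π_RSB(u; a, b) = ∫₀^1 ∫₀^∞ ∫₀^∞ v e^{-v u} · (v^{z-1} e^{-v} / Γ(z)) · (w^{b} z^{b-1} e^{-w z} / Γ(b)) · (w^{a-1} (1-w)^{-a} / B(a, 1-a)) dv dz dw. -/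
open MeasureTheory Set Filter

section RSBaux
open Real

lemma gammaInt (s c : ℝ) (hs : 0 < s) (hc : 0 < c) :
    ∫ x in Ioi (0:ℝ), x ^ (s-1) * Real.exp (-(c*x)) = c ^ (-s) * Real.Gamma s := by
  have h := integral_rpow_mul_exp_neg_mul_rpow (p := 1) (q := s-1) (b := c)
    one_pos (by linarith) hc
  simp only [Real.rpow_one, neg_mul, sub_add_cancel, div_one, one_div, inv_one, mul_one] at h
  exact h

lemma betaInt (p q : ℝ) (hp : 0 < p) (hq : 0 < q) :
    ∫ x in Ioo (0:ℝ) 1, x ^ (p-1) * (1-x) ^ (q-1) = betaFn p q := by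
  have h := Complex.Gamma_mul_Gamma_eq_betaIntegral (s := (p:ℂ)) (t := (q:ℂ))
    (by simpa using hp) (by simpa using hq)
  have hI : Complex.betaIntegral p q
      = ((∫ x in (0:ℝ)..1, x ^ (p-1) * (1-x) ^ (q-1) : ℝ) : ℂ) := by
    rw [Complex.betaIntegral, ← intervalIntegral.integral_ofReal]
    apply intervalIntegral.integral_congr
    intro x hx
    rw [Set.uIcc_of_le (by norm_num : (0:ℝ) ≤ 1)] at hx
    simp only []
    rw [Complex.ofReal_mul, Complex.ofReal_cpow hx.1, Complex.ofReal_cpow (by linarith [hx.2] : (0:ℝ) ≤ 1 - x)]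
    push_cast
    ring
  rw [hI, Complex.Gamma_ofReal, Complex.Gamma_ofReal, ← Complex.ofReal_add,
    Complex.Gamma_ofReal, ← Complex.ofReal_mul, ← Complex.ofReal_mul] at h
  have h2 : Real.Gamma p * Real.Gamma q
      = Real.Gamma (p+q) * ∫ x in (0:ℝ)..1, x ^ (p-1) * (1-x) ^ (q-1) :=
    mod_cast h
  have hG : Real.Gamma (p+q) ≠ 0 := (Real.Gamma_pos_of_pos (by linarith)).ne'
  have h3 : ∫ x in (0:ℝ)..1, x ^ (p-1) * (1-x) ^ (q-1) = betaFn p q := by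
    rw [betaFn]; field_simp; linarith [h2]
  rw [← h3, intervalIntegral.integral_of_le (by norm_num : (0:ℝ) ≤ 1),
    integral_Ioc_eq_integral_Ioo]

lemma collect {T S : ℝ} (hT : 0 < T) (hS : 0 < S) (x y z p q : ℝ) :
    Real.exp x * Real.exp y / (Real.exp z) ^ 2 *
      ((Real.exp x) ^ (p-1) * T / (Real.exp z) ^ (p-1) *
        ((Real.exp y) ^ (q-1) * S / (Real.exp z) ^ (q-1)) *
        ((Real.exp x) ^ (-(p+q)) * (Real.exp y) ^ (-(p+q)) / (Real.exp z) ^ (-(p+q))))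
      = (Real.exp x) ^ (-q) * (Real.exp y) ^ (-p) * (T * S) := by
  obtain ⟨τ, rfl⟩ : ∃ τ, Real.exp τ = T := ⟨Real.log T, Real.exp_log hT⟩
  obtain ⟨σ, rfl⟩ : ∃ σ, Real.exp σ = S := ⟨Real.log S, Real.exp_log hS⟩
  have e : ∀ w r : ℝ, (Real.exp w) ^ r = Real.exp (w * r) := fun w r => by
    rw [Real.rpow_def_of_pos (Real.exp_pos w), Real.log_exp]
  simp only [e, ← Real.exp_nat_mul, div_eq_mul_inv, ← Real.exp_neg, ← Real.exp_add]
  rw [Real.exp_eq_exp]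
  push_cast
  ring

lemma betaShift (p q L : ℝ) (hp : 0 < p) (hq : 0 < q) (hL : 0 < L) :
    ∫ w in Ioo (0:ℝ) 1, w ^ (p-1) * (1-w) ^ (q-1) * (w+L) ^ (-(p+q))
      = betaFn p q * L ^ (-q) * (1+L) ^ (-p) := by
  set f : ℝ → ℝ := fun t => L * t / (1 + L - t) with hf
  set f' : ℝ → ℝ := fun t => L * (1 + L) / (1 + L - t) ^ 2 with hf'
  have hden : ∀ t ∈ Ioo (0:ℝ) 1, (0:ℝ) < 1 + L - t := fun t ht => by
    have := ht.2; linarith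
  have hderiv : ∀ t ∈ Ioo (0:ℝ) 1, HasDerivWithinAt f (f' t) (Ioo 0 1) t := by
    intro t ht
    have hne : 1 + L - t ≠ 0 := (hden t ht).ne'
    have h1 : HasDerivAt (fun t : ℝ => L * t) L t := by
      simpa using (hasDerivAt_id t).const_mul L
    have h2 : HasDerivAt (fun t : ℝ => 1 + L - t) (-1) t := by
      simpa using (hasDerivAt_id t).const_sub (1 + L)
    have := (h1.div h2 hne)
    have heq : (L * (1 + L - t) - L * t * (-1)) / (1 + L - t) ^ 2 = f' t := by
      rw [hf']; field_simp; ring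
    exact (heq ▸ this).hasDerivWithinAt
  have hinj : InjOn f (Ioo 0 1) := by
    intro s hs t ht hst
    have hs' := (hden s hs).ne'
    have ht' := (hden t ht).ne'
    rw [hf, div_eq_div_iff hs' ht'] at hst
    have : L * (1 + L) * s = L * (1 + L) * t := by nlinarith [hst]
    have hLL : L * (1 + L) ≠ 0 := by positivity
    exact mul_left_cancel₀ hLL this
  have himg : f '' Ioo 0 1 = Ioo 0 1 := by
    ext w
    constructor
    · rintro ⟨t, ht, rfl⟩
      have hd := hden t ht
      constructor
      · exact div_pos (mul_pos hL ht.1) hd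
      · rw [hf, div_lt_one hd]
        nlinarith [ht.1, ht.2]
    · intro hw
      have hwL : (0:ℝ) < w + L := by linarith [hw.1]
      have hBL : L + L ^ 2 ≠ 0 := by positivity
      refine ⟨w * (1 + L) / (w + L), ⟨div_pos (mul_pos hw.1 (by linarith)) hwL, ?_⟩, ?_⟩
      · rw [div_lt_one hwL]; nlinarith [hw.2]
      · have hden2 : 1 + L - w*(1+L)/(w+L) = L*(1+L)/(w+L) := by
          field_simp; ring
        rw [hf]
        simp only [hden2]
        rw [div_eq_iff (by positivity : L*(1+L)/(w+L) ≠ 0)]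
        ring
  calc ∫ w in Ioo (0:ℝ) 1, w ^ (p-1) * (1-w) ^ (q-1) * (w+L) ^ (-(p+q))
      = ∫ w in f '' Ioo 0 1, w ^ (p-1) * (1-w) ^ (q-1) * (w+L) ^ (-(p+q)) := by rw [himg]
    _ = ∫ t in Ioo (0:ℝ) 1, |f' t| •
          ((f t) ^ (p-1) * (1 - f t) ^ (q-1) * (f t + L) ^ (-(p+q))) :=
        integral_image_eq_integral_abs_deriv_smul measurableSet_Ioo hderiv hinj _
    _ = ∫ t in Ioo (0:ℝ) 1, (L ^ (-q) * (1+L) ^ (-p)) * (t ^ (p-1) * (1-t) ^ (q-1)) := by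
        refine setIntegral_congr_fun measurableSet_Ioo (fun t ht => ?_)
        have hd := hden t ht
        have ht0 := ht.1
        have ht1 : (0:ℝ) < 1 - t := by linarith [ht.2]
        have hft : f t = L * t / (1 + L - t) := rfl
        have h1mf : 1 - f t = (1 + L) * (1 - t) / (1 + L - t) := by
          rw [hft]; field_simp; ring
        have hfL : f t + L = L * (1 + L) / (1 + L - t) := by
          rw [hft]; field_simp; ring
        have hf't : f' t = L * (1 + L) / (1 + L - t) ^ 2 := rfl
        have hf'pos : 0 < f' t := by rw [hf't]; positivity
        rw [smul_eq_mul, abs_of_pos hf'pos, hft, h1mf, hfL, hf't]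
        rw [div_rpow (by positivity) hd.le, div_rpow (by positivity) hd.le,
          div_rpow (by positivity) hd.le,
          mul_rpow (by positivity) ht0.le, mul_rpow (by positivity) ht1.le,
          mul_rpow hL.le (by positivity)]
        have key := collect (Real.rpow_pos_of_pos ht0 (p-1)) (Real.rpow_pos_of_pos ht1 (q-1))
          (Real.log L) (Real.log (1+L)) (Real.log (1+L-t)) p q
        rw [Real.exp_log hL, Real.exp_log (by positivity : (0:ℝ) < 1 + L),
          Real.exp_log hd] at key
        rw [key]
    _ = betaFn p q * L ^ (-q) * (1+L) ^ (-p) := by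
        rw [MeasureTheory.integral_const_mul, betaInt p q hp hq]; ring

end RSBaux

/-- For `a ∈ (0,1)`, `b > 0`, `u > 0`, the RSB density is the marginal of the
hierarchical model `u|v ~ Ex(v)`, `v|z ~ Ga(z,1)`, `z|w ~ Ga(b,w)`, `w ~ Be(a,1-a)`. -/
theorem rsb_hierarchical_representation (a b u : ℝ) (ha : a ∈ Set.Ioo (0 : ℝ) 1)
    (hb : 0 < b) (hu : 0 < u) :
    piRSB a b u
      = ∫ w in Set.Ioo (0 : ℝ) 1, ∫ z in Set.Ioi (0 : ℝ), ∫ v in Set.Ioi (0 : ℝ),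
          v * Real.exp (-(v * u)) * (v ^ (z - 1) * Real.exp (-v) / Real.Gamma z) *
            (w ^ b * z ^ (b - 1) * Real.exp (-(w * z)) / Real.Gamma b) *
            (w ^ (a - 1) * (1 - w) ^ (-a) / betaFn a (1 - a)) := by
  obtain ⟨ha0, ha1⟩ := ha
  have h1u : (0:ℝ) < 1 + u := by linarith
  set L := Real.log (1 + u) with hLdef
  have hL : 0 < L := Real.log_pos (by linarith)
  have hGb : 0 < Real.Gamma b := Real.Gamma_pos_of_pos hb
  have hBeta : 0 < betaFn a (1-a) := by
    rw [betaFn]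
    exact div_pos (mul_pos (Real.Gamma_pos_of_pos ha0)
      (Real.Gamma_pos_of_pos (by linarith))) (Real.Gamma_pos_of_pos (by norm_num))
  symm
  calc (∫ w in Set.Ioo (0 : ℝ) 1, ∫ z in Set.Ioi (0 : ℝ), ∫ v in Set.Ioi (0 : ℝ),
          v * Real.exp (-(v * u)) * (v ^ (z - 1) * Real.exp (-v) / Real.Gamma z) *
            (w ^ b * z ^ (b - 1) * Real.exp (-(w * z)) / Real.Gamma b) *
            (w ^ (a - 1) * (1 - w) ^ (-a) / betaFn a (1 - a)))
      = ∫ w in Set.Ioo (0 : ℝ) 1,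
          ((b * (1+u)⁻¹ / betaFn a (1-a)) *
            (w ^ ((a+b)-1) * (1-w) ^ ((1-a)-1) * (w+L) ^ (-((a+b)+(1-a))))) := by
        refine setIntegral_congr_fun measurableSet_Ioo (fun w hw => ?_)
        have hw0 : (0:ℝ) < w := hw.1
        have hwL : (0:ℝ) < w + L := by linarith
        calc (∫ z in Set.Ioi (0 : ℝ), ∫ v in Set.Ioi (0 : ℝ),
                v * Real.exp (-(v * u)) * (v ^ (z - 1) * Real.exp (-v) / Real.Gamma z) *
                  (w ^ b * z ^ (b - 1) * Real.exp (-(w * z)) / Real.Gamma b) *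
                  (w ^ (a - 1) * (1 - w) ^ (-a) / betaFn a (1 - a)))
            = ∫ z in Set.Ioi (0 : ℝ),
                (((1+u)⁻¹ * (w ^ b / Real.Gamma b) *
                    (w ^ (a-1) * (1-w) ^ (-a) / betaFn a (1-a))) *
                  (z ^ ((b+1)-1) * Real.exp (-((w+L)*z)))) := by
              refine setIntegral_congr_fun measurableSet_Ioi (fun z hz => ?_)
              have hz0 : (0:ℝ) < z := hz
              have hGz : 0 < Real.Gamma z := Real.Gamma_pos_of_pos hz0
              have hv : (∫ v in Set.Ioi (0 : ℝ),
                  v * Real.exp (-(v * u)) * (v ^ (z - 1) * Real.exp (-v) / Real.Gamma z) *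
                    (w ^ b * z ^ (b - 1) * Real.exp (-(w * z)) / Real.Gamma b) *
                    (w ^ (a - 1) * (1 - w) ^ (-a) / betaFn a (1 - a)))
                  = ((w ^ b * z ^ (b - 1) * Real.exp (-(w * z)) / Real.Gamma b) *
                      (w ^ (a - 1) * (1 - w) ^ (-a) / betaFn a (1 - a)) / Real.Gamma z) *
                    ((1+u) ^ (-(z+1)) * Real.Gamma (z+1)) := by
                rw [← gammaInt (z+1) (1+u) (by linarith) h1u,
                  ← MeasureTheory.integral_const_mul]
                refine setIntegral_congr_fun measurableSet_Ioi (fun v hv => ?_)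
                have hv0 : (0:ℝ) < v := hv
                have h1 : v * v ^ (z-1) = v ^ (z+1-1) := by
                  rw [show z+1-1 = 1+(z-1) by ring, Real.rpow_add hv0, Real.rpow_one]
                have h2 : Real.exp (-((1+u)*v)) = Real.exp (-(v*u)) * Real.exp (-v) := by
                  rw [← Real.exp_add]; congr 1; ring
                rw [h2, ← h1]
                ring
              rw [hv]
              have hGz1 : Real.Gamma (z+1) = z * Real.Gamma z :=
                Real.Gamma_add_one hz0.ne'
              have hpow : (1+u) ^ (-(z+1)) = (1+u)⁻¹ * Real.exp (-(L*z)) := by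
                rw [show -(z+1) = -1 + -z by ring, Real.rpow_add h1u, Real.rpow_neg_one,
                  Real.rpow_def_of_pos h1u]
                congr 2
                rw [← hLdef]; ring
              have hz2 : z * z ^ (b-1) = z ^ (b+1-1) := by
                rw [show b+1-1 = 1+(b-1) by ring, Real.rpow_add hz0, Real.rpow_one]
              have hexp2 : Real.exp (-((w+L)*z))
                  = Real.exp (-(w*z)) * Real.exp (-(L*z)) := by
                rw [← Real.exp_add]; congr 1; ring
              rw [hGz1, hpow, ← hz2, hexp2]
              field_simp [hGz.ne', hGb.ne', hBeta.ne']
          _ = ((1+u)⁻¹ * (w ^ b / Real.Gamma b) *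
                  (w ^ (a-1) * (1-w) ^ (-a) / betaFn a (1-a))) *
                ((w+L) ^ (-(b+1)) * Real.Gamma (b+1)) := by
              rw [MeasureTheory.integral_const_mul,
                gammaInt (b+1) (w+L) (by linarith) hwL]
          _ = (b * (1+u)⁻¹ / betaFn a (1-a)) *
                (w ^ ((a+b)-1) * (1-w) ^ ((1-a)-1) * (w+L) ^ (-((a+b)+(1-a)))) := by
              rw [Real.Gamma_add_one hb.ne',
                show -((a+b)+(1-a)) = -(b+1) by ring,
                show ((1-a)-1 : ℝ) = -a by ring,
                show w ^ ((a+b)-1) = w ^ b * w ^ (a-1) from by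
                  rw [← Real.rpow_add hw0]; congr 1; ring]
              field_simp [hGb.ne', hBeta.ne']
    _ = (b * (1+u)⁻¹ / betaFn a (1-a)) *
          (betaFn (a+b) (1-a) * L ^ (-(1-a)) * (1+L) ^ (-(a+b))) := by
        rw [MeasureTheory.integral_const_mul,
          betaShift (a+b) (1-a) L (by linarith) (by linarith) hL]
    _ = piRSB a b u := by
        have hGa : 0 < Real.Gamma a := Real.Gamma_pos_of_pos ha0
        have hGa' : 0 < Real.Gamma (1-a) := Real.Gamma_pos_of_pos (by linarith)
        have hGab : 0 < Real.Gamma (a+b) := Real.Gamma_pos_of_pos (by linarith)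
        rw [piRSB, ← hLdef, show (a-1 : ℝ) = -(1-a) by ring]
        rw [betaFn, betaFn, betaFn,
          show ((a+b)+(1-a) : ℝ) = b+1 by ring,
          show (a+(1-a) : ℝ) = 1 by ring,
          Real.Gamma_one, Real.Gamma_add_one hb.ne']
        field_simp
end

section
/- For all a, b > 0, the mean of the RSB distribution is infinite: ∫₀^∞ u · π_RSB(u; a, b) du = ∞. -/
open MeasureTheory Set Filter

lemma lintegral_rpow_neg_half_top {M : ℝ} (hM : 0 < M) :
    ∫⁻ u in Set.Ioi M, ENNReal.ofReal (u ^ (-(1/2) : ℝ)) = ⊤ := by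
  by_contra h
  have hmeas : AEStronglyMeasurable (fun u : ℝ => u ^ (-(1/2) : ℝ))
      ((volume : Measure ℝ).restrict (Set.Ioi M)) := by
    refine ContinuousOn.aestronglyMeasurable ?_ measurableSet_Ioi
    intro x hx
    exact (Real.continuousAt_rpow_const x _ (Or.inl (hM.trans hx).ne')).continuousWithinAt
  have hnn : 0 ≤ᵐ[(volume : Measure ℝ).restrict (Set.Ioi M)]
      fun u : ℝ => u ^ (-(1/2) : ℝ) := by
    filter_upwards [ae_restrict_mem measurableSet_Ioi] with u hu
    exact Real.rpow_nonneg (le_of_lt (hM.trans hu)) _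
  have hint := (lintegral_ofReal_ne_top_iff_integrable hmeas hnn).mp h
  rw [← IntegrableOn] at hint
  rw [integrableOn_Ioi_rpow_iff hM] at hint
  linarith

-- eventual log bound
lemma log_pow_eventually_le (b : ℝ) (hb : 0 < b) :
    ∀ᶠ u in atTop, (1 + Real.log (1 + u)) ^ (b + 1) ≤ u ^ ((1:ℝ)/2) := by
  have hlo := isLittleO_log_rpow_rpow_atTop (b + 1)
      (by norm_num : (0:ℝ) < 1/2)
  have hc : (0:ℝ) < ((3:ℝ) ^ (b+1))⁻¹ :=
    inv_pos.mpr (Real.rpow_pos_of_pos (by norm_num) _)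
  filter_upwards [hlo.def hc, eventually_ge_atTop (1:ℝ),
      Real.tendsto_log_atTop.eventually_ge_atTop (1 + Real.log 2)] with u hle hu1 hlog
  have hupos : (0:ℝ) < u := lt_of_lt_of_le one_pos hu1
  have hlogu : (1:ℝ) ≤ Real.log u := by
    have : (0:ℝ) ≤ Real.log 2 := Real.log_nonneg (by norm_num)
    linarith
  have h3 : 1 + Real.log (1 + u) ≤ 3 * Real.log u := by
    have h1u : Real.log (1 + u) ≤ Real.log (2 * u) :=
      Real.log_le_log (by linarith) (by linarith)
    rw [Real.log_mul (by norm_num) hupos.ne'] at h1u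
    linarith
  have hL0 : (0:ℝ) ≤ 1 + Real.log (1 + u) := by
    have := Real.log_nonneg (by linarith : (1:ℝ) ≤ 1 + u); linarith
  calc (1 + Real.log (1 + u)) ^ (b + 1)
      ≤ (3 * Real.log u) ^ (b + 1) :=
        Real.rpow_le_rpow hL0 h3 (by linarith)
    _ = 3 ^ (b+1) * Real.log u ^ (b + 1) :=
        Real.mul_rpow (by norm_num) (by linarith)
    _ ≤ 3 ^ (b+1) * (((3:ℝ) ^ (b+1))⁻¹ * u ^ ((1:ℝ)/2)) := by
        have hnorm := hle
        rw [Real.norm_eq_abs, Real.norm_eq_abs,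
          abs_of_nonneg (Real.rpow_nonneg (by linarith) _),
          abs_of_nonneg (Real.rpow_nonneg hupos.le _)] at hnorm
        exact mul_le_mul_of_nonneg_left hnorm (Real.rpow_nonneg (by norm_num) _)
    _ = u ^ ((1:ℝ)/2) := by
        rw [← mul_assoc, mul_inv_cancel₀ (Real.rpow_pos_of_pos (by norm_num) _).ne', one_mul]

/-- For all `a, b > 0`, the mean of the RSB distribution is infinite:
`∫₀^∞ u π_RSB(u; a, b) du = ∞`. -/
theorem rsb_mean_infinite (a b : ℝ) (ha : 0 < a) (hb : 0 < b) :
    ∫⁻ u in Set.Ioi (0 : ℝ), ENNReal.ofReal (u * piRSB a b u) = ⊤ := by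
  have hB : 0 < betaFn a b :=
    div_pos (mul_pos (Real.Gamma_pos_of_pos ha) (Real.Gamma_pos_of_pos hb))
      (Real.Gamma_pos_of_pos (by linarith))
  set c₁ : ℝ := min 1 (2 ^ (1 - a)) with hc₁def
  have hc₁ : 0 < c₁ := lt_min one_pos (Real.rpow_pos_of_pos (by norm_num) _)
  set c₂ : ℝ := (1 / betaFn a b) * c₁ * (1/2) with hc₂def
  have hc₂ : 0 < c₂ := by positivity
  -- eventual data
  obtain ⟨M₀, hM₀⟩ := eventually_atTop.mp
    ((log_pow_eventually_le b hb).and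
      ((eventually_ge_atTop (1:ℝ)).and (eventually_ge_atTop (Real.exp 1))))
  set M : ℝ := max M₀ 1 with hMdef
  have hM : (0:ℝ) < M := lt_of_lt_of_le one_pos (le_max_right _ _)
  -- pointwise bound on Ioi M
  have key : ∀ u ∈ Set.Ioi M, c₂ * u ^ (-(1/2) : ℝ) ≤ u * piRSB a b u := by
    intro u hu
    obtain ⟨hpow, hu1, hue⟩ := hM₀ u (le_of_lt (lt_of_le_of_lt (le_max_left _ _) hu))
    have hupos : (0:ℝ) < u := lt_trans hM hu
    have hlog1 : (1:ℝ) ≤ Real.log (1 + u) := by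
      calc (1:ℝ) = Real.log (Real.exp 1) := (Real.log_exp 1).symm
        _ ≤ Real.log (1 + u) := Real.log_le_log (Real.exp_pos 1) (by linarith)
    set L : ℝ := 1 + Real.log (1 + u) with hLdef
    have hL2 : (2:ℝ) ≤ L := by simp only [hLdef]; linarith
    have hLpos : (0:ℝ) < L := by linarith
    -- (ii)
    have hii : c₁ * L ^ (a - 1) ≤ (Real.log (1 + u)) ^ (a - 1) := by
      have hlogL : Real.log (1 + u) = L - 1 := by simp [hLdef]
      rcases le_or_gt 1 a with hA | hA
      · have hhalf : L / 2 ≤ L - 1 := by linarith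
        have : (L/2) ^ (a-1) ≤ (L-1) ^ (a-1) :=
          Real.rpow_le_rpow (by positivity) hhalf (by linarith)
        rw [Real.div_rpow hLpos.le (by norm_num)] at this
        have h2 : (2:ℝ) ^ (a-1) ≠ 0 := (Real.rpow_pos_of_pos two_pos _).ne'
        rw [hlogL]
        calc c₁ * L ^ (a-1) ≤ 2 ^ (1-a) * L ^ (a-1) :=
              mul_le_mul_of_nonneg_right (min_le_right _ _) (Real.rpow_nonneg hLpos.le _)
          _ = L ^ (a-1) / 2 ^ (a-1) := by
              rw [show (1-a : ℝ) = -(a-1) by ring, Real.rpow_neg two_pos.le,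
                div_eq_mul_inv]
              ring
          _ ≤ (L-1) ^ (a-1) := this
      · have : L ^ (a-1) ≤ (L-1) ^ (a-1) :=
          Real.rpow_le_rpow_of_nonpos (by linarith) (by linarith) (by linarith)
        rw [hlogL]
        calc c₁ * L ^ (a-1) ≤ 1 * L ^ (a-1) :=
              mul_le_mul_of_nonneg_right (min_le_left _ _) (Real.rpow_nonneg hLpos.le _)
          _ = L ^ (a-1) := one_mul _
          _ ≤ (L-1) ^ (a-1) := this
    -- (iv)
    have hiv : u ^ (-(1/2) : ℝ) ≤ L ^ (-(b+1) : ℝ) := by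
      rw [Real.rpow_neg hupos.le, Real.rpow_neg hLpos.le]
      exact inv_anti₀ (Real.rpow_pos_of_pos hLpos _) hpow
    -- (iii)
    have hiii : L ^ (-(b+1) : ℝ) = L ^ (a-1) * L ^ (-(a+b)) := by
      rw [← Real.rpow_add hLpos]; ring_nf
    -- (i)
    have hi : (1:ℝ)/2 ≤ u / (1 + u) := by
      rw [div_le_div_iff₀ (by norm_num) (by linarith)]; linarith
    calc c₂ * u ^ (-(1/2) : ℝ)
        ≤ c₂ * L ^ (-(b+1) : ℝ) := by
          exact mul_le_mul_of_nonneg_left hiv hc₂.le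
      _ = (1 / betaFn a b) * (c₁ * L ^ (a-1)) * L ^ (-(a+b)) * (1/2) := by
          rw [hiii, hc₂def]; ring
      _ ≤ (1 / betaFn a b) * ((Real.log (1+u)) ^ (a-1)) * L ^ (-(a+b)) * (u / (1+u)) := by
          have h1B : (0:ℝ) ≤ 1 / betaFn a b := by positivity
          have hLab : (0:ℝ) ≤ L ^ (-(a+b) : ℝ) := Real.rpow_nonneg hLpos.le _
          gcongr
      _ = u * piRSB a b u := by
          rw [piRSB, div_eq_mul_inv]; ring
  -- conclude
  have step1 : ∫⁻ u in Set.Ioi M, ENNReal.ofReal (c₂ * u ^ (-(1/2) : ℝ))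
      ≤ ∫⁻ u in Set.Ioi M, ENNReal.ofReal (u * piRSB a b u) := by
    refine setLIntegral_mono' measurableSet_Ioi fun u hu => ?_
    exact ENNReal.ofReal_le_ofReal (key u hu)
  have step2 : ∫⁻ u in Set.Ioi M, ENNReal.ofReal (c₂ * u ^ (-(1/2) : ℝ)) = ⊤ := by
    have : ∀ u : ℝ, ENNReal.ofReal (c₂ * u ^ (-(1/2) : ℝ))
        = ENNReal.ofReal c₂ * ENNReal.ofReal (u ^ (-(1/2) : ℝ)) := fun u =>
      ENNReal.ofReal_mul hc₂.le
    simp_rw [this]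
    rw [lintegral_const_mul' _ _ ENNReal.ofReal_ne_top,
      lintegral_rpow_neg_half_top hM, ENNReal.mul_top]
    exact (ENNReal.ofReal_pos.mpr hc₂).ne'
  have step3 : ∫⁻ u in Set.Ioi M, ENNReal.ofReal (u * piRSB a b u)
      ≤ ∫⁻ u in Set.Ioi (0:ℝ), ENNReal.ofReal (u * piRSB a b u) :=
    lintegral_mono_set (Set.Ioi_subset_Ioi hM.le)
  rw [eq_top_iff]
  calc (⊤ : ENNReal) = _ := step2.symm
    _ ≤ _ := step1
    _ ≤ _ := step3
end

section
/- For all a ∈ (0,1] and b > 0, the negative first moment of the RSB distribution is infinite: ∫₀^∞ u^{-1} · π_RSB(u; a, b) du = ∞. -/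
open MeasureTheory Set Filter ENNReal

lemma inv_not_integrable : ¬ IntegrableOn (fun x : ℝ => x⁻¹) (Set.Ioo (0:ℝ) 1) := by
  intro h
  have : IntegrableOn (fun x : ℝ => x ^ (-1 : ℝ)) (Set.Ioo (0:ℝ) 1) := by
    refine h.congr_fun (fun x hx => ?_) measurableSet_Ioo
    rw [Real.rpow_neg_one]
  rw [intervalIntegral.integrableOn_Ioo_rpow_iff one_pos] at this
  linarith

lemma lintegral_inv_Ioo_top : ∫⁻ u in Set.Ioo (0:ℝ) 1, ENNReal.ofReal u⁻¹ = ⊤ := by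
  by_contra h
  have hpos : (0:ℝ → ℝ) ≤ᵐ[volume.restrict (Set.Ioo (0:ℝ) 1)] fun x => x⁻¹ := by
    filter_upwards [ae_restrict_mem measurableSet_Ioo] with x hx
    exact (inv_pos.2 hx.1).le
  exact inv_not_integrable
    ((lintegral_ofReal_ne_top_iff_integrable measurable_inv.aestronglyMeasurable hpos).mp h)

/-- For all `a ∈ (0,1]` and `b > 0`, the negative first moment of the RSB
distribution is infinite: `∫₀^∞ u⁻¹ π_RSB(u; a, b) du = ∞`. -/
theorem rsb_neg_moment_infinite (a b : ℝ) (ha : a ∈ Set.Ioc (0 : ℝ) 1) (hb : 0 < b) :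
    ∫⁻ u in Set.Ioi (0 : ℝ), ENNReal.ofReal (u⁻¹ * piRSB a b u) = ⊤ := by
  obtain ⟨ha0, ha1⟩ := ha
  have hB : 0 < betaFn a b := by
    have h1 := Real.Gamma_pos_of_pos ha0
    have h2 := Real.Gamma_pos_of_pos hb
    have h3 := Real.Gamma_pos_of_pos (by linarith : 0 < a + b)
    exact div_pos (mul_pos h1 h2) h3
  set C : ℝ := (1 / betaFn a b) * (1/2) * (2 : ℝ) ^ (-(a + b)) with hC
  have hCpos : 0 < C := by positivity
  -- lower bound on Ioo 0 1
  have key : ∀ u ∈ Set.Ioo (0:ℝ) 1, C * u⁻¹ ≤ u⁻¹ * piRSB a b u := by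
    intro u hu
    obtain ⟨hu0, hu1⟩ := hu
    have hlog0 : 0 < Real.log (1 + u) := Real.log_pos (by linarith)
    have hlog1 : Real.log (1 + u) ≤ 1 := by
      have := Real.log_le_sub_one_of_pos (by linarith : (0:ℝ) < 1 + u)
      linarith
    have h1 : (1:ℝ) ≤ (Real.log (1 + u)) ^ (a - 1) :=
      Real.one_le_rpow_of_pos_of_le_one_of_nonpos hlog0 hlog1 (by linarith)
    have h2 : (1/2 : ℝ) ≤ (1 + u)⁻¹ := by
      rw [le_inv_comm₀ (by norm_num) (by linarith)]
      · linarith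
    have h3 : (2:ℝ) ^ (-(a+b)) ≤ (1 + Real.log (1 + u)) ^ (-(a + b)) :=
      Real.rpow_le_rpow_of_nonpos (by linarith) (by linarith) (by linarith)
    have : C ≤ piRSB a b u := by
      rw [hC, piRSB]
      have hb1 : 0 ≤ (1 / betaFn a b) := by positivity
      calc (1 / betaFn a b) * (1/2) * (2:ℝ) ^ (-(a+b))
          ≤ (1 / betaFn a b) * ((Real.log (1 + u)) ^ (a - 1) * (1 + u)⁻¹) *
            ((1 + Real.log (1 + u)) ^ (-(a + b))) := by
            apply mul_le_mul _ h3 (by positivity) (by positivity)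
            apply mul_le_mul_of_nonneg_left _ hb1
            calc (1/2 : ℝ) = 1 * (1/2) := by ring
              _ ≤ (Real.log (1 + u)) ^ (a - 1) * (1 + u)⁻¹ :=
                mul_le_mul h1 h2 (by norm_num) (by positivity)
        _ = _ := by ring
    calc C * u⁻¹ ≤ piRSB a b u * u⁻¹ :=
          mul_le_mul_of_nonneg_right this (by positivity)
      _ = u⁻¹ * piRSB a b u := by ring
  have hsub : Set.Ioo (0:ℝ) 1 ⊆ Set.Ioi (0:ℝ) := fun x hx => hx.1
  refine top_le_iff.mp ?_
  calc (⊤ : ℝ≥0∞) = ENNReal.ofReal C * (∫⁻ u in Set.Ioo (0:ℝ) 1, ENNReal.ofReal u⁻¹) := by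
        rw [lintegral_inv_Ioo_top, ENNReal.mul_top (by simp [ENNReal.ofReal_eq_zero, not_le, hCpos])]
    _ = (∫⁻ u in Set.Ioo (0:ℝ) 1, ENNReal.ofReal C * ENNReal.ofReal u⁻¹) := by
        rw [lintegral_const_mul _ (measurable_inv.ennreal_ofReal)]
    _ = (∫⁻ u in Set.Ioo (0:ℝ) 1, ENNReal.ofReal (C * u⁻¹)) := by
        refine lintegral_congr fun u => ?_
        rw [← ENNReal.ofReal_mul hCpos.le]
    _ ≤ (∫⁻ u in Set.Ioo (0:ℝ) 1, ENNReal.ofReal (u⁻¹ * piRSB a b u)) := by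
        refine setLIntegral_mono' measurableSet_Ioo fun u hu => ?_
        exact ENNReal.ofReal_le_ofReal (key u hu)
    _ ≤ (∫⁻ u in Set.Ioi (0:ℝ), ENNReal.ofReal (u⁻¹ * piRSB a b u)) :=
        lintegral_mono_set hsub
end

section
/- (Theorem 2, first part) Fix a, b > 0, s ∈ (0,1], and ε ∈ (0,1). Define the posterior probability that η < ε given a zero count as P(λ) = s ∫₀^ε e^{-λ u} π_RSB(u; a, b) du / ((1-s) e^{-λ} + s ∫₀^∞ e^{-λ u} π_RSB(u; a, b) du) for λ > 0. Then P is a nondecreasing function of λ on (0, ∞). -/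
open MeasureTheory Set Filter

lemma betaFn_pos {a b : ℝ} (ha : 0 < a) (hb : 0 < b) : 0 < betaFn a b :=
  div_pos (mul_pos (Real.Gamma_pos_of_pos ha) (Real.Gamma_pos_of_pos hb))
    (Real.Gamma_pos_of_pos (by linarith))

lemma piRSB_pos {a b : ℝ} (ha : 0 < a) (hb : 0 < b) {u : ℝ} (hu : 0 < u) :
    0 < piRSB a b u := by
  have hlog : 0 < Real.log (1 + u) := Real.log_pos (by linarith)
  unfold piRSB
  have h1 : 0 < 1 / betaFn a b := div_pos one_pos (betaFn_pos ha hb)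
  have h2 : (0:ℝ) < (Real.log (1 + u)) ^ (a - 1) := Real.rpow_pos_of_pos hlog _
  have h3 : (0:ℝ) < (1 + u)⁻¹ := by positivity
  have h4 : (0:ℝ) < (1 + Real.log (1 + u)) ^ (-(a + b)) :=
    Real.rpow_pos_of_pos (by linarith) _
  positivity

lemma piRSB_meas (a b : ℝ) : Measurable (piRSB a b) := by
  have h1 : Measurable fun u : ℝ => Real.log (1 + u) :=
    Real.measurable_log.comp (by fun_prop)
  unfold piRSB
  fun_prop

/-- bound near zero: `π(u) ≤ C u^(a-1)` on `(0,1]`. -/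
lemma piRSB_le_near_zero {a b : ℝ} (ha : 0 < a) (hb : 0 < b) {u : ℝ}
    (hu : 0 < u) (hu1 : u ≤ 1) :
    piRSB a b u ≤ (1 / betaFn a b) * ((2:ℝ) ^ (1 - a) + 1) * u ^ (a - 1) := by
  have hB := betaFn_pos ha hb
  set L := Real.log (1 + u) with hL
  have hLpos : 0 < L := Real.log_pos (by linarith)
  have hLle : L ≤ u := by
    have := Real.log_le_sub_one_of_pos (show (0:ℝ) < 1 + u by linarith)
    simpa using this
  have hLge : u / 2 ≤ L := by
    have h1 : Real.log (1 + u)⁻¹ ≤ (1 + u)⁻¹ - 1 :=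
      Real.log_le_sub_one_of_pos (by positivity)
    rw [Real.log_inv] at h1
    have h2 : 1 - (1 + u)⁻¹ ≤ L := by linarith
    have h3 : u / 2 ≤ 1 - (1 + u)⁻¹ := by
      have h4 : 1 - (1 + u)⁻¹ = u / (1 + u) := by
        field_simp
        ring
      rw [h4, div_le_div_iff₀ (by norm_num) (by linarith)]
      nlinarith
    linarith
  have key : L ^ (a - 1) ≤ ((2:ℝ) ^ (1 - a) + 1) * u ^ (a - 1) := by
    have hupow : (0:ℝ) ≤ u ^ (a - 1) := Real.rpow_nonneg hu.le _
    rcases le_or_gt a 1 with hcase | hcase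
    · have h1 : L ^ (a - 1) ≤ (u / 2) ^ (a - 1) :=
        Real.rpow_le_rpow_of_nonpos (by positivity) hLge (by linarith)
      have h2 : (u / 2) ^ (a - 1) = (2:ℝ) ^ (1 - a) * u ^ (a - 1) := by
        rw [Real.div_rpow hu.le (by norm_num), show (1:ℝ) - a = -(a-1) by ring,
          Real.rpow_neg (by norm_num)]
        field_simp
      have h3 : (0:ℝ) ≤ (2:ℝ) ^ (1 - a) * u ^ (a - 1) := by positivity
      nlinarith
    · have h1 : L ^ (a - 1) ≤ u ^ (a - 1) :=
        Real.rpow_le_rpow hLpos.le hLle (by linarith)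
      nlinarith [Real.rpow_nonneg (show (0:ℝ) ≤ 2 by norm_num) (1 - a)]
  have hinv : (1 + u)⁻¹ ≤ 1 := by
    rw [inv_le_one_iff₀]; right; linarith
  have hlast : (1 + L) ^ (-(a + b)) ≤ 1 :=
    Real.rpow_le_one_of_one_le_of_nonpos (by linarith) (by linarith)
  have hLpow : (0:ℝ) ≤ L ^ (a - 1) := Real.rpow_nonneg hLpos.le _
  have hinv0 : (0:ℝ) ≤ (1 + u)⁻¹ := by positivity
  have hlast0 : (0:ℝ) ≤ (1 + L) ^ (-(a + b)) :=
    (Real.rpow_pos_of_pos (by linarith) _).le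
  have hC : (0:ℝ) ≤ 1 / betaFn a b := (div_pos one_pos hB).le
  unfold piRSB
  rw [← hL]
  calc (1 / betaFn a b) * L ^ (a - 1) * (1 + u)⁻¹ * (1 + L) ^ (-(a + b))
      ≤ (1 / betaFn a b) * L ^ (a - 1) * 1 * 1 := by
        apply mul_le_mul (mul_le_mul le_rfl hinv hinv0 (by positivity)) hlast hlast0
        positivity
    _ = (1 / betaFn a b) * L ^ (a - 1) := by ring
    _ ≤ (1 / betaFn a b) * (((2:ℝ) ^ (1 - a) + 1) * u ^ (a - 1)) :=
        mul_le_mul_of_nonneg_left key hC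
    _ = (1 / betaFn a b) * ((2:ℝ) ^ (1 - a) + 1) * u ^ (a - 1) := by ring

/-- bound on the tail: `π(u)` is bounded on `[ε,∞)`. -/
lemma piRSB_le_tail {a b ε : ℝ} (ha : 0 < a) (hb : 0 < b) (hε : 0 < ε) {u : ℝ}
    (hu : ε ≤ u) :
    piRSB a b u ≤ (1 / betaFn a b) * ((Real.log (1 + ε)) ^ (a - 1) + 1) := by
  have hB := betaFn_pos ha hb
  set L := Real.log (1 + u) with hL
  set L0 := Real.log (1 + ε) with hL0
  have hL0pos : 0 < L0 := Real.log_pos (by linarith)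
  have hLge : L0 ≤ L := Real.log_le_log (by linarith) (by linarith)
  have hLpos : 0 < L := lt_of_lt_of_le hL0pos hLge
  have key : L ^ (a - 1) * (1 + L) ^ (-(a + b)) ≤ L0 ^ (a - 1) + 1 := by
    have hlast : (1 + L) ^ (-(a + b)) ≤ 1 :=
      Real.rpow_le_one_of_one_le_of_nonpos (by linarith) (by linarith)
    have hlast0 : (0:ℝ) ≤ (1 + L) ^ (-(a + b)) :=
      (Real.rpow_pos_of_pos (by linarith) _).le
    have hL0pow : (0:ℝ) ≤ L0 ^ (a - 1) := Real.rpow_nonneg hL0pos.le _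
    rcases le_or_gt a 1 with hcase | hcase
    · have h1 : L ^ (a - 1) ≤ L0 ^ (a - 1) :=
        Real.rpow_le_rpow_of_nonpos hL0pos hLge (by linarith)
      nlinarith [Real.rpow_nonneg hLpos.le (a - 1)]
    · have h1 : L ^ (a - 1) ≤ (1 + L) ^ (a - 1) :=
        Real.rpow_le_rpow hLpos.le (by linarith) (by linarith)
      have h2 : (1 + L) ^ (a - 1) * (1 + L) ^ (-(a + b)) = (1 + L) ^ (a - 1 + -(a + b)) := by
        rw [← Real.rpow_add (by linarith)]
      have h3 : (1 + L) ^ (a - 1 + -(a + b)) ≤ 1 :=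
        Real.rpow_le_one_of_one_le_of_nonpos (by linarith) (by linarith)
      nlinarith [Real.rpow_nonneg hLpos.le (a - 1)]
  have hinv : (1 + u)⁻¹ ≤ 1 := by
    rw [inv_le_one_iff₀]; right; linarith
  have hinv0 : (0:ℝ) ≤ (1 + u)⁻¹ := inv_nonneg.mpr (by linarith)
  have hC : (0:ℝ) ≤ 1 / betaFn a b := (div_pos one_pos hB).le
  have hLpow : (0:ℝ) ≤ L ^ (a - 1) := Real.rpow_nonneg hLpos.le _
  have hlast0 : (0:ℝ) ≤ (1 + L) ^ (-(a + b)) :=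
    (Real.rpow_pos_of_pos (by linarith) _).le
  unfold piRSB
  rw [← hL]
  calc (1 / betaFn a b) * L ^ (a - 1) * (1 + u)⁻¹ * (1 + L) ^ (-(a + b))
      = (1 / betaFn a b) * ((1 + u)⁻¹ * (L ^ (a - 1) * (1 + L) ^ (-(a + b)))) := by ring
    _ ≤ (1 / betaFn a b) * (1 * (L0 ^ (a - 1) + 1)) := by
        apply mul_le_mul_of_nonneg_left _ hC
        apply mul_le_mul hinv key (by positivity) (by norm_num)
    _ = (1 / betaFn a b) * ((Real.log (1 + ε)) ^ (a - 1) + 1) := by rw [one_mul]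

lemma integrableOn_piRSB_Ioo {a b ε : ℝ} (ha : 0 < a) (hb : 0 < b) (hε : 0 < ε)
    (hε1 : ε ≤ 1) (lam : ℝ) (hlam : 0 ≤ lam) :
    IntegrableOn (fun u => Real.exp (-(lam * u)) * piRSB a b u) (Ioo (0:ℝ) ε) := by
  apply Integrable.mono'
    (g := fun u => (1 / betaFn a b) * ((2:ℝ) ^ (1 - a) + 1) * u ^ (a - 1))
  · exact (((intervalIntegral.integrableOn_Ioo_rpow_iff hε).mpr
      (by linarith)).const_mul _)
  · exact ((Real.measurable_exp.comp (by fun_prop)).mul (piRSB_meas a b)).aestronglyMeasurable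
  · filter_upwards [ae_restrict_mem measurableSet_Ioo] with u hu
    have hπ := (piRSB_pos ha hb hu.1).le
    rw [Real.norm_eq_abs, abs_of_nonneg (by positivity)]
    have h1 : Real.exp (-(lam * u)) ≤ 1 := by
      rw [Real.exp_le_one_iff]
      nlinarith [hu.1.le]
    calc Real.exp (-(lam * u)) * piRSB a b u ≤ 1 * piRSB a b u :=
        mul_le_mul_of_nonneg_right h1 hπ
      _ = piRSB a b u := one_mul _
      _ ≤ _ := piRSB_le_near_zero ha hb hu.1 (le_of_lt (lt_of_lt_of_le hu.2 hε1))

lemma integrableOn_piRSB_Ici {a b ε : ℝ} (ha : 0 < a) (hb : 0 < b) (hε : 0 < ε)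
    (lam : ℝ) (hlam : 0 < lam) :
    IntegrableOn (fun u => Real.exp (-(lam * u)) * piRSB a b u) (Ici ε) := by
  apply Integrable.mono'
    (g := fun u => (1 / betaFn a b) * ((Real.log (1 + ε)) ^ (a - 1) + 1) * Real.exp (-lam * u))
  · apply Integrable.const_mul
    exact Iff.mpr integrableOn_Ici_iff_integrableOn_Ioi (exp_neg_integrableOn_Ioi ε hlam)
  · exact ((Real.measurable_exp.comp (by fun_prop)).mul (piRSB_meas a b)).aestronglyMeasurable
  · filter_upwards [ae_restrict_mem measurableSet_Ici] with u hu
    have hu0 : 0 < u := lt_of_lt_of_le hε hu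
    have hπ := (piRSB_pos ha hb hu0).le
    rw [Real.norm_eq_abs, abs_of_nonneg (by positivity)]
    have hbd := piRSB_le_tail ha hb hε hu
    calc Real.exp (-(lam * u)) * piRSB a b u
        ≤ Real.exp (-(lam * u)) * ((1 / betaFn a b) * ((Real.log (1 + ε)) ^ (a - 1) + 1)) :=
          mul_le_mul_of_nonneg_left hbd (Real.exp_pos _).le
      _ = (1 / betaFn a b) * ((Real.log (1 + ε)) ^ (a - 1) + 1) * Real.exp (-lam * u) := by
          rw [neg_mul]; ring

lemma N_pos {a b ε : ℝ} (ha : 0 < a) (hb : 0 < b) (hε : 0 < ε) (hε1 : ε ≤ 1)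
    (lam : ℝ) (hlam : 0 < lam) :
    0 < ∫ u in Set.Ioo (0 : ℝ) ε, Real.exp (-(lam * u)) * piRSB a b u := by
  rw [setIntegral_pos_iff_support_of_nonneg_ae ?_
    (integrableOn_piRSB_Ioo ha hb hε hε1 lam hlam.le)]
  · apply lt_of_lt_of_le _ (measure_mono (show Set.Ioo (0:ℝ) ε ⊆
      Function.support (fun u => Real.exp (-(lam * u)) * piRSB a b u) ∩ Set.Ioo 0 ε from ?_))
    · rw [Real.volume_Ioo]
      exact ENNReal.ofReal_pos.mpr (by linarith)
    · intro u hu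
      exact ⟨ne_of_gt (mul_pos (Real.exp_pos _) (piRSB_pos ha hb hu.1)), hu⟩
  · filter_upwards [ae_restrict_mem measurableSet_Ioo] with u hu
    exact (mul_pos (Real.exp_pos _) (piRSB_pos ha hb hu.1)).le

lemma T_nonneg {a b ε : ℝ} (ha : 0 < a) (hb : 0 < b) (hε : 0 < ε) (lam : ℝ) :
    0 ≤ ∫ u in Set.Ici ε, Real.exp (-(lam * u)) * piRSB a b u := by
  apply setIntegral_nonneg measurableSet_Ici
  intro u hu
  exact (mul_pos (Real.exp_pos _) (piRSB_pos ha hb (lt_of_lt_of_le hε hu))).le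

lemma N_mono {a b ε l1 l2 : ℝ} (ha : 0 < a) (hb : 0 < b) (hε : 0 < ε) (hε1 : ε ≤ 1)
    (hl1 : 0 < l1) (hle : l1 ≤ l2) :
    (∫ u in Set.Ioo (0 : ℝ) ε, Real.exp (-(l1 * u)) * piRSB a b u) ≤
      Real.exp ((l2 - l1) * ε) *
        ∫ u in Set.Ioo (0 : ℝ) ε, Real.exp (-(l2 * u)) * piRSB a b u := by
  rw [← MeasureTheory.integral_const_mul]
  apply setIntegral_mono_on (integrableOn_piRSB_Ioo ha hb hε hε1 l1 hl1.le)
    ((integrableOn_piRSB_Ioo ha hb hε hε1 l2 (by linarith)).const_mul _) measurableSet_Ioo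
  intro u hu
  rw [← mul_assoc, ← Real.exp_add]
  apply mul_le_mul_of_nonneg_right _ (piRSB_pos ha hb hu.1).le
  apply Real.exp_le_exp.mpr
  nlinarith [mul_le_mul_of_nonneg_left hu.2.le (sub_nonneg.mpr hle)]

lemma T_mono {a b ε l1 l2 : ℝ} (ha : 0 < a) (hb : 0 < b) (hε : 0 < ε)
    (hl1 : 0 < l1) (hle : l1 ≤ l2) :
    (∫ u in Set.Ici ε, Real.exp (-(l2 * u)) * piRSB a b u) ≤
      Real.exp (-((l2 - l1) * ε)) *
        ∫ u in Set.Ici ε, Real.exp (-(l1 * u)) * piRSB a b u := by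
  rw [← MeasureTheory.integral_const_mul]
  apply setIntegral_mono_on (integrableOn_piRSB_Ici ha hb hε l2 (by linarith))
    ((integrableOn_piRSB_Ici ha hb hε l1 hl1).const_mul _) measurableSet_Ici
  intro u hu
  have hu0 : 0 < u := lt_of_lt_of_le hε hu
  rw [← mul_assoc, ← Real.exp_add]
  apply mul_le_mul_of_nonneg_right _ (piRSB_pos ha hb hu0).le
  apply Real.exp_le_exp.mpr
  nlinarith [mul_le_mul_of_nonneg_left hu (sub_nonneg.mpr hle)]


/-- (Theorem 2, first part) The posterior probability `Pr(η < ε | y = 0)` under the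
RSB mixture `(1-s)δ₁ + s π_RSB(·; a, b)` is a nondecreasing function of the
Poisson rate `λ` on `(0, ∞)`. -/
theorem posterior_zero_prob_monotone (a b s ε : ℝ) (ha : 0 < a) (hb : 0 < b)
    (hs : s ∈ Set.Ioc (0 : ℝ) 1) (hε : ε ∈ Set.Ioo (0 : ℝ) 1) :
    MonotoneOn
      (fun lam : ℝ =>
        s * (∫ u in Set.Ioo (0 : ℝ) ε, Real.exp (-(lam * u)) * piRSB a b u) /
          ((1 - s) * Real.exp (-lam)
            + s * ∫ u in Set.Ioi (0 : ℝ), Real.exp (-(lam * u)) * piRSB a b u))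
      (Set.Ioi 0) := by
  obtain ⟨hs0, hs1⟩ := hs
  obtain ⟨hε0, hε1⟩ := hε
  intro l1 hl1 l2 hl2 hle
  simp only [Set.mem_Ioi] at hl1 hl2
  dsimp only
  -- split the integral over (0,∞)
  have hsplit : ∀ lam : ℝ, 0 < lam →
      (∫ u in Set.Ioi (0 : ℝ), Real.exp (-(lam * u)) * piRSB a b u) =
        (∫ u in Set.Ioo (0 : ℝ) ε, Real.exp (-(lam * u)) * piRSB a b u) +
          ∫ u in Set.Ici ε, Real.exp (-(lam * u)) * piRSB a b u := by
    intro lam hlam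
    rw [← Set.Ioo_union_Ici_eq_Ioi hε0,
      setIntegral_union ((Set.Iio_disjoint_Ici le_rfl).mono_left Set.Ioo_subset_Iio_self)
        measurableSet_Ici (integrableOn_piRSB_Ioo ha hb hε0 hε1.le lam hlam.le)
        (integrableOn_piRSB_Ici ha hb hε0 lam hlam)]
  rw [hsplit l1 hl1, hsplit l2 hl2]
  have hN1 := N_pos ha hb hε0 hε1.le l1 hl1
  have hN2 := N_pos ha hb hε0 hε1.le l2 hl2
  have hT1 := T_nonneg ha hb hε0 l1
  have hT2 := T_nonneg ha hb hε0 l2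
  have hNle := N_mono ha hb hε0 hε1.le hl1 hle
  have hTle := T_mono ha hb hε0 hl1 hle
  set N1 := ∫ u in Set.Ioo (0 : ℝ) ε, Real.exp (-(l1 * u)) * piRSB a b u with hN1d
  set N2 := ∫ u in Set.Ioo (0 : ℝ) ε, Real.exp (-(l2 * u)) * piRSB a b u with hN2d
  set T1 := ∫ u in Set.Ici ε, Real.exp (-(l1 * u)) * piRSB a b u with hT1d
  set T2 := ∫ u in Set.Ici ε, Real.exp (-(l2 * u)) * piRSB a b u with hT2d
  clear_value N1 N2 T1 T2
  clear hN1d hN2d hT1d hT2d hsplit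
  -- key1 : N1 * exp(-l2) ≤ N2 * exp(-l1)
  have hexpc : Real.exp ((l2 - l1) * ε) ≤ Real.exp (l2 - l1) := by
    apply Real.exp_le_exp.mpr
    nlinarith [sub_nonneg.mpr hle]
  have key1 : N1 * Real.exp (-l2) ≤ N2 * Real.exp (-l1) := by
    calc N1 * Real.exp (-l2)
        ≤ (Real.exp (l2 - l1) * N2) * Real.exp (-l2) := by
          apply mul_le_mul_of_nonneg_right _ (Real.exp_pos _).le
          exact hNle.trans (mul_le_mul_of_nonneg_right hexpc hN2.le)
      _ = N2 * (Real.exp (l2 - l1) * Real.exp (-l2)) := by ring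
      _ = N2 * Real.exp (-l1) := by rw [← Real.exp_add]; ring_nf
  have key2 : N1 * T2 ≤ N2 * T1 := by
    calc N1 * T2
        ≤ (Real.exp ((l2 - l1) * ε) * N2) * (Real.exp (-((l2 - l1) * ε)) * T1) := by
          apply mul_le_mul hNle hTle hT2 (by positivity)
      _ = (Real.exp ((l2 - l1) * ε) * Real.exp (-((l2 - l1) * ε))) * (N2 * T1) := by ring
      _ = N2 * T1 := by rw [← Real.exp_add, add_neg_cancel, Real.exp_zero, one_mul]
  -- denominators positive
  have hden1 : 0 < (1 - s) * Real.exp (-l1) + s * (N1 + T1) := by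
    nlinarith [mul_nonneg (show (0:ℝ) ≤ 1 - s by linarith) (Real.exp_pos (-l1)).le,
      mul_pos hs0 hN1, mul_nonneg hs0.le hT1]
  have hden2 : 0 < (1 - s) * Real.exp (-l2) + s * (N2 + T2) := by
    nlinarith [mul_nonneg (show (0:ℝ) ≤ 1 - s by linarith) (Real.exp_pos (-l2)).le,
      mul_pos hs0 hN2, mul_nonneg hs0.le hT2]
  rw [div_le_div_iff₀ hden1 hden2]
  nlinarith [mul_le_mul_of_nonneg_left key1 (mul_nonneg hs0.le (by linarith : (0:ℝ) ≤ 1 - s)),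
    mul_le_mul_of_nonneg_left key2 (mul_nonneg hs0.le hs0.le)]
end

section
/- (Theorem 2, second part) Fix b > 0, s ∈ (0,1], λ > 0, and shape parameters 0 < a < 1 < a' < ∞. For ε ∈ (0,1), define P(ε; c) = s ∫₀^ε e^{-λ u} π_RSB(u; c, b) du / ((1-s) e^{-λ} + s ∫₀^∞ e^{-λ u} π_RSB(u; c, b) du) for c ∈ {a, a'}. Then P(ε; a) / P(ε; a') → ∞ as ε → 0+. -/
open MeasureTheory Set Filter

noncomputable def fRSB (b lam c u : ℝ) : ℝ := Real.exp (-(lam * u)) * piRSB c b u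

lemma log_one_add_pos {u : ℝ} (hu : 0 < u) : 0 < Real.log (1 + u) :=
  Real.log_pos (by linarith)

lemma log_one_add_le {u : ℝ} (hu : 0 < u) : Real.log (1 + u) ≤ u := by
  have := Real.log_le_sub_one_of_pos (show (0:ℝ) < 1 + u by linarith)
  linarith

lemma fRSB_pos {b lam c u : ℝ} (hc : 0 < c) (hb : 0 < b) (hu : 0 < u) :
    0 < fRSB b lam c u := by
  have h1 := log_one_add_pos hu
  exact mul_pos (Real.exp_pos _)
    (mul_pos (mul_pos (mul_pos (one_div_pos.mpr (betaFn_pos hc hb))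
      (Real.rpow_pos_of_pos h1 _)) (inv_pos.mpr (by linarith)))
      (Real.rpow_pos_of_pos (by linarith) _))

lemma fRSB_continuousOn {b lam c : ℝ} : ContinuousOn (fRSB b lam c) (Ioi 0) := by
  apply ContinuousOn.mul (Continuous.continuousOn (by continuity))
  unfold piRSB
  apply ContinuousOn.mul
  apply ContinuousOn.mul
  apply ContinuousOn.mul continuousOn_const
  · exact ContinuousOn.rpow_const
      (ContinuousOn.log (by fun_prop) (fun x hx => by simp at hx; positivity))
      (fun x hx => Or.inl (ne_of_gt (log_one_add_pos hx)))
  · exact ContinuousOn.inv₀ (by fun_prop) (fun x hx => by simp at hx; positivity)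
  · exact ContinuousOn.rpow_const
      (ContinuousOn.add continuousOn_const
        (ContinuousOn.log (by fun_prop) (fun x hx => by simp at hx; positivity)))
      (fun x hx => Or.inl (by simp at hx; nlinarith [log_one_add_pos hx]))

lemma half_le_log_one_add {u : ℝ} (hu : 0 < u) (hu1 : u ≤ 1) :
    u / 2 ≤ Real.log (1 + u) := by
  have h := Real.one_sub_inv_le_log_of_pos (show (0:ℝ) < 1 + u by linarith)
  have h1 : (0:ℝ) < 1 + u := by linarith
  have h2 : 1 - (1+u)⁻¹ = u / (1+u) := by field_simp; ring
  rw [h2] at h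
  refine le_trans ?_ h
  gcongr
  linarith

lemma log_pow_le_small {c u : ℝ} (hc : 0 < c) (hu : 0 < u) (hu1 : u ≤ 1) :
    (Real.log (1 + u)) ^ (c - 1) ≤ max 1 ((2:ℝ) ^ (1 - c)) * u ^ (c - 1) := by
  rcases le_or_gt c 1 with h | h
  · have h1 : (Real.log (1 + u)) ^ (c - 1) ≤ (u / 2) ^ (c - 1) :=
      Real.rpow_le_rpow_of_nonpos (by positivity) (half_le_log_one_add hu hu1)
        (by linarith)
    have h2 : (u / 2 : ℝ) ^ (c - 1) = (2:ℝ) ^ (1 - c) * u ^ (c - 1) := by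
      rw [Real.div_rpow hu.le (by norm_num), div_eq_mul_inv, mul_comm,
        ← Real.rpow_neg (by norm_num)]
      norm_num
    rw [h2] at h1
    exact h1.trans (mul_le_mul_of_nonneg_right (le_max_right _ _) (by positivity))
  · have h1 : (Real.log (1 + u)) ^ (c - 1) ≤ u ^ (c - 1) :=
      Real.rpow_le_rpow (log_one_add_pos hu).le (log_one_add_le hu) (by linarith)
    refine h1.trans ?_
    nlinarith [Real.rpow_nonneg hu.le (c-1), le_max_left (1:ℝ) ((2:ℝ)^(1-c))]

lemma log_pow_le_large {c u : ℝ} (hc : 0 < c) (hu : 1 < u) :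
    (Real.log (1 + u)) ^ (c - 1) ≤ 2 * (2:ℝ) ^ c * u ^ c := by
  have hu0 : (0:ℝ) < u := by linarith
  have h2c : (1:ℝ) ≤ (2:ℝ) ^ c := Real.one_le_rpow (by norm_num) hc.le
  have huc : (1:ℝ) ≤ u ^ c := Real.one_le_rpow hu.le hc.le
  rcases le_or_gt 1 c with h | h
  · have h1 : (Real.log (1 + u)) ^ (c - 1) ≤ u ^ (c - 1) :=
      Real.rpow_le_rpow (log_one_add_pos hu0).le (log_one_add_le hu0) (by linarith)
    have h2 : u ^ (c - 1) ≤ u ^ c :=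
      Real.rpow_le_rpow_of_exponent_le hu.le (by linarith)
    nlinarith [Real.rpow_nonneg hu0.le c]
  · have hl2 : (1/2 : ℝ) ≤ Real.log (1 + u) := by
      have : Real.log 2 ≤ Real.log (1 + u) :=
        Real.log_le_log (by norm_num) (by linarith)
      nlinarith [Real.log_two_gt_d9]
    have h1 : (Real.log (1 + u)) ^ (c - 1) ≤ (1/2 : ℝ) ^ (c - 1) :=
      Real.rpow_le_rpow_of_nonpos (by norm_num) hl2 (by linarith)
    have h2 : (1/2 : ℝ) ^ (c - 1) = (2:ℝ) ^ (1 - c) := by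
      rw [show (1/2 : ℝ) = 2⁻¹ by norm_num, Real.inv_rpow (by norm_num),
        ← Real.rpow_neg (by norm_num)]
      norm_num
    rw [h2] at h1
    have h3 : (2:ℝ) ^ (1 - c) ≤ 2 := by
      calc (2:ℝ) ^ (1 - c) ≤ (2:ℝ) ^ (1:ℝ) :=
            Real.rpow_le_rpow_of_exponent_le (by norm_num) (by linarith)
        _ = 2 := Real.rpow_one 2
    nlinarith

lemma fRSB_le_small {b lam c u : ℝ} (hc : 0 < c) (hb : 0 < b) (hlam : 0 ≤ lam)
    (hu : 0 < u) (hu1 : u ≤ 1) :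
    fRSB b lam c u ≤ (1 / betaFn c b * max 1 ((2:ℝ) ^ (1 - c))) * u ^ (c - 1) := by
  have hB := betaFn_pos hc hb
  have hL := log_one_add_pos hu
  have h1 : Real.exp (-(lam * u)) ≤ 1 := by
    rw [← Real.exp_zero]
    exact Real.exp_le_exp.mpr (by nlinarith)
  have h2 := log_pow_le_small hc hu hu1
  have h3 : (1 + u)⁻¹ ≤ 1 := by
    rw [inv_le_one_iff₀]; right; linarith
  have h4 : (1 + Real.log (1 + u)) ^ (-(c + b)) ≤ 1 :=
    Real.rpow_le_one_of_one_le_of_nonpos (by linarith) (by linarith)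
  calc fRSB b lam c u
      = Real.exp (-(lam * u)) * ((1 / betaFn c b) * (Real.log (1 + u)) ^ (c - 1)
          * (1 + u)⁻¹ * (1 + Real.log (1 + u)) ^ (-(c + b))) := by
        unfold fRSB piRSB; ring
    _ ≤ 1 * ((1 / betaFn c b) * (max 1 ((2:ℝ) ^ (1 - c)) * u ^ (c - 1)) * 1 * 1) := by
        gcongr <;> positivity
    _ = (1 / betaFn c b * max 1 ((2:ℝ) ^ (1 - c))) * u ^ (c - 1) := by ring

lemma fRSB_le_large {b lam c u : ℝ} (hc : 0 < c) (hb : 0 < b)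
    (hu : 1 < u) :
    fRSB b lam c u ≤ (1 / betaFn c b * (2 * (2:ℝ) ^ c)) *
      (u ^ c * Real.exp (-lam * u)) := by
  have hB := betaFn_pos hc hb
  have hu0 : (0:ℝ) < u := by linarith
  have hL := log_one_add_pos hu0
  have h2 := log_pow_le_large hc hu
  have h3 : (1 + u)⁻¹ ≤ 1 := by
    rw [inv_le_one_iff₀]; right; linarith
  have h4 : (1 + Real.log (1 + u)) ^ (-(c + b)) ≤ 1 :=
    Real.rpow_le_one_of_one_le_of_nonpos (by linarith) (by linarith)
  calc fRSB b lam c u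
      = Real.exp (-(lam * u)) * ((1 / betaFn c b) * (Real.log (1 + u)) ^ (c - 1)
          * (1 + u)⁻¹ * (1 + Real.log (1 + u)) ^ (-(c + b))) := by
        unfold fRSB piRSB; ring
    _ ≤ Real.exp (-(lam * u)) * ((1 / betaFn c b) * (2 * (2:ℝ) ^ c * u ^ c) * 1 * 1) := by
        gcongr <;> positivity
    _ = (1 / betaFn c b * (2 * (2:ℝ) ^ c)) * (u ^ c * Real.exp (-lam * u)) := by
        rw [neg_mul]; ring

lemma fRSB_integrableOn {b lam c : ℝ} (hc : 0 < c) (hb : 0 < b) (hlam : 0 < lam) :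
    IntegrableOn (fRSB b lam c) (Ioi (0:ℝ)) := by
  rw [← Ioc_union_Ioi_eq_Ioi (zero_le_one : (0:ℝ) ≤ 1)]
  apply IntegrableOn.union
  · -- Ioc 0 1
    have hg : IntegrableOn (fun u : ℝ =>
        (1 / betaFn c b * max 1 ((2:ℝ) ^ (1 - c))) * u ^ (c - 1)) (Ioc (0:ℝ) 1) := by
      rw [integrableOn_Ioc_iff_integrableOn_Ioo]
      exact ((intervalIntegral.integrableOn_Ioo_rpow_iff one_pos).mpr (by linarith)).const_mul _
    refine Integrable.mono hg
      ((fRSB_continuousOn.mono Ioc_subset_Ioi_self).aestronglyMeasurable measurableSet_Ioc)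
      ?_
    rw [ae_restrict_iff' measurableSet_Ioc]
    refine ae_of_all _ fun u hu => ?_
    rw [mem_Ioc] at hu
    have h1 := fRSB_le_small hc hb hlam.le hu.1 hu.2
    have h2 := (fRSB_pos (lam := lam) hc hb hu.1).le
    rw [Real.norm_eq_abs, Real.norm_eq_abs, abs_of_nonneg h2]
    exact h1.trans (le_abs_self _)
  · -- Ioi 1
    have hg : IntegrableOn (fun u : ℝ =>
        (1 / betaFn c b * (2 * (2:ℝ) ^ c)) * (u ^ c * Real.exp (-lam * u))) (Ioi (1:ℝ)) := by
      have h := integrableOn_rpow_mul_exp_neg_mul_rpow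
        (show (-1:ℝ) < c by linarith) one_pos hlam
      simp only [Real.rpow_one] at h
      exact (h.mono_set (Ioi_subset_Ioi zero_le_one)).const_mul _
    refine Integrable.mono hg
      ((fRSB_continuousOn.mono (Ioi_subset_Ioi zero_le_one)).aestronglyMeasurable
        measurableSet_Ioi)
      ?_
    rw [ae_restrict_iff' measurableSet_Ioi]
    refine ae_of_all _ fun u hu => ?_
    rw [mem_Ioi] at hu
    have h1 := fRSB_le_large hc hb (lam := lam) hu
    have h2 := (fRSB_pos (lam := lam) hc hb (by linarith : (0:ℝ) < u)).le
    rw [Real.norm_eq_abs, Real.norm_eq_abs, abs_of_nonneg h2]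
    exact h1.trans (le_abs_self _)

lemma fRSB_setIntegral_pos {b lam c : ℝ} (hc : 0 < c) (hb : 0 < b) (hlam : 0 < lam)
    {s : Set ℝ} (hs : MeasurableSet s) (hsub : s ⊆ Ioi 0) (hpos : 0 < volume s) :
    0 < ∫ u in s, fRSB b lam c u := by
  rw [setIntegral_pos_iff_support_of_nonneg_ae]
  · refine hpos.trans_le (measure_mono fun x hx => ⟨?_, hx⟩)
    exact Function.mem_support.mpr (ne_of_gt (fRSB_pos (lam := lam) hc hb (hsub hx)))
  · filter_upwards [ae_restrict_mem hs] with u hu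
    exact (fRSB_pos (lam := lam) hc hb (hsub hu)).le
  · exact (fRSB_integrableOn hc hb hlam).mono_set hsub

lemma integral_upper {b lam a' : ℝ} (ha' : 1 < a') (hb : 0 < b) (hlam : 0 < lam)
    {ε : ℝ} (hε : 0 < ε) (hε1 : ε ≤ 1) :
    ∫ u in Ioo (0:ℝ) ε, fRSB b lam a' u ≤ (1 / betaFn a' b) * (ε ^ a' / a') := by
  have ha0 : (0:ℝ) < a' := by linarith
  have hB := betaFn_pos ha0 hb
  have key : ∀ u ∈ Ioo (0:ℝ) ε, fRSB b lam a' u ≤ (1 / betaFn a' b) * u ^ (a' - 1) := by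
    intro u hu
    rw [mem_Ioo] at hu
    obtain ⟨hu1, hu2⟩ := hu
    have hu : 0 < u ∧ u < ε := ⟨hu1, hu2⟩
    have hL := log_one_add_pos hu.1
    have h1 : Real.exp (-(lam * u)) ≤ 1 := by
      rw [← Real.exp_zero]
      exact Real.exp_le_exp.mpr (by nlinarith [hu.1])
    have h2 : (Real.log (1 + u)) ^ (a' - 1) ≤ u ^ (a' - 1) :=
      Real.rpow_le_rpow hL.le (log_one_add_le hu.1) (by linarith)
    have h3 : (1 + u)⁻¹ ≤ 1 := by
      rw [inv_le_one_iff₀]; right; linarith [hu.1]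
    have h4 : (1 + Real.log (1 + u)) ^ (-(a' + b)) ≤ 1 :=
      Real.rpow_le_one_of_one_le_of_nonpos (by linarith) (by linarith)
    calc fRSB b lam a' u
        = (1 / betaFn a' b) * (Real.exp (-(lam * u)) * (Real.log (1 + u)) ^ (a' - 1)
            * (1 + u)⁻¹ * (1 + Real.log (1 + u)) ^ (-(a' + b))) := by
          unfold fRSB piRSB; ring
      _ ≤ (1 / betaFn a' b) * (1 * u ^ (a' - 1) * 1 * 1) := by
          refine mul_le_mul_of_nonneg_left ?_ (one_div_pos.mpr hB).le
          gcongr <;>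
            first
              | positivity
              | exact mul_nonneg (mul_nonneg (Real.exp_nonneg _)
                  (Real.rpow_nonneg hL.le _)) (by positivity)
              | exact Real.rpow_nonneg hL.le _
      _ = (1 / betaFn a' b) * u ^ (a' - 1) := by ring
  have hint : IntegrableOn (fun u : ℝ => (1 / betaFn a' b) * u ^ (a' - 1)) (Ioo 0 ε) := by
    exact ((intervalIntegral.integrableOn_Ioo_rpow_iff hε).mpr (by linarith)).const_mul _
  have h5 : ∫ u in Ioo (0:ℝ) ε, fRSB b lam a' u
      ≤ ∫ u in Ioo (0:ℝ) ε, (1 / betaFn a' b) * u ^ (a' - 1) :=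
    setIntegral_mono_on
      (((fRSB_integrableOn ha0 hb hlam).mono_set
        (fun x hx => hx.1)))
      hint measurableSet_Ioo key
  refine h5.trans_eq ?_
  rw [← integral_Ioc_eq_integral_Ioo, ← intervalIntegral.integral_of_le hε.le,
    intervalIntegral.integral_const_mul,
    integral_rpow (Or.inl (by linarith : (-1:ℝ) < a' - 1))]
  have he : a' - 1 + 1 = a' := by ring
  rw [he, Real.zero_rpow (by linarith), sub_zero]

lemma integral_lower {b lam a : ℝ} (ha : 0 < a) (ha1 : a < 1) (hb : 0 < b) (hlam : 0 < lam)
    {ε : ℝ} (hε : 0 < ε) (hε1 : ε ≤ 1) :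
    (1 / betaFn a b * (Real.exp (-lam) * 2⁻¹ * (2:ℝ) ^ (-(a + b)))) * ε ^ a / 2
      ≤ ∫ u in Ioo (0:ℝ) ε, fRSB b lam a u := by
  have hB := betaFn_pos ha hb
  set K : ℝ := 1 / betaFn a b * (Real.exp (-lam) * 2⁻¹ * (2:ℝ) ^ (-(a + b))) with hK
  have key : ∀ u ∈ Ioo (ε/2) ε, K * ε ^ (a - 1) ≤ fRSB b lam a u := by
    intro u hu
    rw [mem_Ioo] at hu
    obtain ⟨hu1, hu2⟩ := hu
    have hu0 : 0 < u := lt_trans (by positivity) hu1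
    have hL := log_one_add_pos hu0
    have hLu : Real.log (1 + u) ≤ u := log_one_add_le hu0
    have h1 : Real.exp (-lam) ≤ Real.exp (-(lam * u)) :=
      Real.exp_le_exp.mpr (by nlinarith)
    have h2 : ε ^ (a - 1) ≤ (Real.log (1 + u)) ^ (a - 1) :=
      Real.rpow_le_rpow_of_nonpos hL (by linarith) (by linarith)
    have h3 : (2:ℝ)⁻¹ ≤ (1 + u)⁻¹ := by
      gcongr
      linarith
    have h4 : (2:ℝ) ^ (-(a + b)) ≤ (1 + Real.log (1 + u)) ^ (-(a + b)) :=
      Real.rpow_le_rpow_of_nonpos (by linarith) (by linarith) (by linarith)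
    calc K * ε ^ (a - 1)
        = (1 / betaFn a b) * (Real.exp (-lam) * ε ^ (a - 1) * 2⁻¹
            * (2:ℝ) ^ (-(a + b))) := by rw [hK]; ring
      _ ≤ (1 / betaFn a b) * (Real.exp (-(lam * u)) * (Real.log (1 + u)) ^ (a - 1)
            * (1 + u)⁻¹ * (1 + Real.log (1 + u)) ^ (-(a + b))) := by
          refine mul_le_mul_of_nonneg_left ?_ (one_div_pos.mpr hB).le
          gcongr <;> positivity
      _ = fRSB b lam a u := by unfold fRSB piRSB; ring
  have hsub : Ioo (ε/2) ε ⊆ Ioo (0:ℝ) ε := Ioo_subset_Ioo (by positivity) le_rfl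
  have hint : IntegrableOn (fRSB b lam a) (Ioo (0:ℝ) ε) :=
    (fRSB_integrableOn ha hb hlam).mono_set (fun x hx => hx.1)
  have hmono : ∫ u in Ioo (ε/2) ε, fRSB b lam a u ≤ ∫ u in Ioo (0:ℝ) ε, fRSB b lam a u := by
    refine setIntegral_mono_set hint ?_ hsub.eventuallyLE
    filter_upwards [ae_restrict_mem measurableSet_Ioo] with u hu
    exact (fRSB_pos (lam := lam) ha hb (mem_Ioo.mp hu).1).le
  have hconst : ∫ _u in Ioo (ε/2) ε, (K * ε ^ (a - 1)) = (ε - ε/2) * (K * ε ^ (a - 1)) := by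
    rw [setIntegral_const, Real.volume_real_Ioo_of_le (by linarith), smul_eq_mul]
  have hle : ∫ _u in Ioo (ε/2) ε, (K * ε ^ (a - 1)) ≤ ∫ u in Ioo (ε/2) ε, fRSB b lam a u :=
    setIntegral_mono_on (integrableOn_const measure_Ioo_lt_top.ne)
      (hint.mono_set hsub) measurableSet_Ioo key
  have hr : ε ^ a = ε ^ (a - 1) * ε := by
    rw [← Real.rpow_add_one hε.ne' (a - 1)]; ring_nf
  have : K * ε ^ a / 2 = (ε - ε/2) * (K * ε ^ (a - 1)) := by rw [hr]; ring
  rw [this]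
  exact hle.trans hmono |>.trans_eq' hconst

theorem posterior_main (a a' b s lam : ℝ) (hb : 0 < b)
    (hs : s ∈ Set.Ioc (0 : ℝ) 1) (hlam : 0 < lam)
    (ha : 0 < a) (ha1 : a < 1) (ha' : 1 < a') :
    Filter.Tendsto (fun ε : ℝ =>
      (s * (∫ u in Set.Ioo (0 : ℝ) ε, fRSB b lam a u) /
        ((1 - s) * Real.exp (-lam) + s * ∫ u in Set.Ioi (0 : ℝ), fRSB b lam a u)) /
      (s * (∫ u in Set.Ioo (0 : ℝ) ε, fRSB b lam a' u) /
        ((1 - s) * Real.exp (-lam) + s * ∫ u in Set.Ioi (0 : ℝ), fRSB b lam a' u)))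
      (nhdsWithin 0 (Set.Ioi 0)) Filter.atTop := by
  obtain ⟨hs0, hs1⟩ := hs
  have ha'0 : (0:ℝ) < a' := by linarith
  have hB₁ := betaFn_pos ha hb
  have hB₂ := betaFn_pos ha'0 hb
  set D₁ : ℝ := (1 - s) * Real.exp (-lam) + s * ∫ u in Set.Ioi (0:ℝ), fRSB b lam a u with hD₁def
  set D₂ : ℝ := (1 - s) * Real.exp (-lam) + s * ∫ u in Set.Ioi (0:ℝ), fRSB b lam a' u with hD₂def
  have hvol : (0:ENNReal) < volume (Ioi (0:ℝ)) := by simp [Real.volume_Ioi]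
  have hI₁ : 0 < ∫ u in Set.Ioi (0:ℝ), fRSB b lam a u :=
    fRSB_setIntegral_pos ha hb hlam measurableSet_Ioi subset_rfl hvol
  have hI₂ : 0 < ∫ u in Set.Ioi (0:ℝ), fRSB b lam a' u :=
    fRSB_setIntegral_pos ha'0 hb hlam measurableSet_Ioi subset_rfl hvol
  have hD₁ : 0 < D₁ :=
    add_pos_of_nonneg_of_pos (mul_nonneg (by linarith) (Real.exp_nonneg _)) (mul_pos hs0 hI₁)
  have hD₂ : 0 < D₂ :=
    add_pos_of_nonneg_of_pos (mul_nonneg (by linarith) (Real.exp_nonneg _)) (mul_pos hs0 hI₂)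
  set Kl : ℝ := 1 / betaFn a b * (Real.exp (-lam) * 2⁻¹ * (2:ℝ) ^ (-(a + b))) with hKl
  set Ku : ℝ := 1 / betaFn a' b with hKu
  have hKl0 : 0 < Kl := by rw [hKl]; positivity
  have hKu0 : 0 < Ku := by rw [hKu]; positivity
  set C : ℝ := (s * Kl / (2 * D₁)) / (s * Ku / (a' * D₂)) with hC
  have hC0 : 0 < C := by
    apply div_pos <;> [skip; skip] <;> apply div_pos <;> positivity
  have htends : Tendsto (fun ε : ℝ => C * ε ^ (a - a')) (nhdsWithin 0 (Set.Ioi 0)) atTop := by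
    apply Tendsto.const_mul_atTop hC0
    have h := (tendsto_rpow_atTop (show (0:ℝ) < a' - a by linarith)).comp
      tendsto_inv_nhdsGT_zero
    refine h.congr' ?_
    filter_upwards [self_mem_nhdsWithin] with x hx
    rw [mem_Ioi] at hx
    show x⁻¹ ^ (a' - a) = x ^ (a - a')
    rw [Real.inv_rpow hx.le, ← Real.rpow_neg hx.le]
    norm_num
  refine tendsto_atTop_mono' _ ?_ htends
  filter_upwards [Ioo_mem_nhdsGT_of_mem (show (0:ℝ) ∈ Ico (0:ℝ) 1 from ⟨le_rfl, one_pos⟩)]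
    with ε hε
  rw [mem_Ioo] at hε
  obtain ⟨hε0, hε1⟩ := hε
  have hlow : Kl * ε ^ a / 2 ≤ ∫ u in Set.Ioo (0:ℝ) ε, fRSB b lam a u :=
    integral_lower ha ha1 hb hlam hε0 hε1.le
  have hup : (∫ u in Set.Ioo (0:ℝ) ε, fRSB b lam a' u) ≤ Ku * (ε ^ a' / a') :=
    integral_upper ha' hb hlam hε0 hε1.le
  have hN₂ : 0 < ∫ u in Set.Ioo (0:ℝ) ε, fRSB b lam a' u :=
    fRSB_setIntegral_pos ha'0 hb hlam measurableSet_Ioo (fun x hx => hx.1)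
      (by simp [Real.volume_Ioo]; linarith)
  have hN₁ : 0 < ∫ u in Set.Ioo (0:ℝ) ε, fRSB b lam a u :=
    fRSB_setIntegral_pos ha hb hlam measurableSet_Ioo (fun x hx => hx.1)
      (by simp [Real.volume_Ioo]; linarith)
  have key : (s * (Kl * ε ^ a / 2) / D₁) / (s * (Ku * (ε ^ a' / a')) / D₂)
      ≤ (s * (∫ u in Set.Ioo (0:ℝ) ε, fRSB b lam a u) / D₁) /
        (s * (∫ u in Set.Ioo (0:ℝ) ε, fRSB b lam a' u) / D₂) := by
    apply div_le_div₀ (by positivity)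
    · gcongr
    · exact div_pos (mul_pos hs0 hN₂) hD₂
    · gcongr
  refine le_trans (le_of_eq ?_) key
  rw [hC, Real.rpow_sub hε0]
  field_simp

/-- The posterior probability `Pr(η < ε | y = 0)` under Poisson rate `lam` and the
RSB mixture `(1-s)δ₁ + s π_RSB(·; c, b)` with shape parameter `c`. -/
noncomputable def postZeroProb (b s lam c ε : ℝ) : ℝ :=
  s * (∫ u in Set.Ioo (0 : ℝ) ε, Real.exp (-(lam * u)) * piRSB c b u) /
    ((1 - s) * Real.exp (-lam)
      + s * ∫ u in Set.Ioi (0 : ℝ), Real.exp (-(lam * u)) * piRSB c b u)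

/-- (Theorem 2, second part) For shapes `0 < a < 1 < a'`, the ratio of posterior
probabilities of `η < ε` given a zero count diverges as `ε → 0⁺`. -/
theorem posterior_zero_prob_ratio_diverges (a a' b s lam : ℝ) (hb : 0 < b)
    (hs : s ∈ Set.Ioc (0 : ℝ) 1) (hlam : 0 < lam)
    (ha : 0 < a) (ha1 : a < 1) (ha' : 1 < a') :
    Filter.Tendsto (fun ε : ℝ => postZeroProb b s lam a ε / postZeroProb b s lam a' ε)
      (nhdsWithin 0 (Set.Ioi 0)) Filter.atTop := by
  exact posterior_main a a' b s lam hb hs hlam ha ha1 ha'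
end

section
/- (Lemma S1) Let b, δ ∈ ℝ and let π : (0,∞) → (0,∞) be a measurable integrable function such that π(u) · (1+u)^{1+δ} · (1 + log(1+u))^{1+b} converges to some constant C > 0 as u → ∞. Define f_π(y; z) = ∫₀^∞ π(u) · (e^z u)^y e^{-e^z u} / y! du for y ∈ ℕ and z ∈ ℝ. Then for every z ∈ ℝ, f_π(y; z) / f_π(y; 0) → e^{δ z} as y → ∞ along the natural numbers. -/
open MeasureTheory Set Filter

open Nat

/-- The Poisson mixture mass function
`f_π(y; z) = ∫₀^∞ π(u) (e^z u)^y e^{-e^z u} / y! du`. -/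
noncomputable def poissonMix (p : ℝ → ℝ) (y : ℕ) (z : ℝ) : ℝ :=
  ∫ u in Set.Ioi (0 : ℝ),
    p u * ((Real.exp z * u) ^ y * Real.exp (-(Real.exp z * u)) / (Nat.factorial y : ℝ))

lemma pm_tendsto_aux1 {c : ℝ} (hc : 0 < c) :
    Tendsto (fun v : ℝ => (1 + v) / (1 + c * v)) atTop (nhds c⁻¹) := by
  have h0 : Tendsto (fun v : ℝ => 1 / v) atTop (nhds 0) := by
    simpa [one_div] using tendsto_inv_atTop_zero
  have h1 : Tendsto (fun v : ℝ => 1 / v + 1) atTop (nhds 1) := by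
    simpa using h0.add tendsto_const_nhds
  have h2 : Tendsto (fun v : ℝ => 1 / v + c) atTop (nhds c) := by
    simpa using h0.add (tendsto_const_nhds (x := c))
  have h := h1.div h2 hc.ne'
  rw [one_div] at h
  refine h.congr' ?_
  filter_upwards [eventually_gt_atTop (0 : ℝ)] with v hv
  have hv' : v ≠ 0 := hv.ne'
  have hcv : 1 + c * v ≠ 0 := by positivity
  rw [Pi.div_apply]
  field_simp

lemma pm_tendsto_aux2 {c : ℝ} (hc : 0 < c) :
    Tendsto (fun v : ℝ => (1 + Real.log (1 + v)) / (1 + Real.log (1 + c * v)))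
      atTop (nhds 1) := by
  have hlin : Tendsto (fun v : ℝ => 1 + c * v) atTop atTop := by
    apply tendsto_atTop_add_const_left
    exact (tendsto_id.const_mul_atTop hc)
  have hden : Tendsto (fun v : ℝ => 1 + Real.log (1 + c * v)) atTop atTop :=
    tendsto_atTop_add_const_left _ _ (Real.tendsto_log_atTop.comp hlin)
  have hdiff : Tendsto (fun v : ℝ => Real.log (1 + v) - Real.log (1 + c * v)) atTop
      (nhds (Real.log c⁻¹)) := by
    have hcont := (Real.continuousAt_log (inv_ne_zero hc.ne')).tendsto.comp (pm_tendsto_aux1 hc)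
    refine hcont.congr' ?_
    filter_upwards [eventually_gt_atTop (0 : ℝ)] with v hv
    have h1 : (0:ℝ) < 1 + v := by linarith
    have h2 : (0:ℝ) < 1 + c * v := by positivity
    simp [Function.comp, Real.log_div h1.ne' h2.ne']
  have h0 : Tendsto (fun v : ℝ =>
      (Real.log (1 + v) - Real.log (1 + c * v)) / (1 + Real.log (1 + c * v)))
      atTop (nhds 0) := hdiff.div_atTop hden
  have h := (tendsto_const_nhds (x := (1:ℝ))).add h0
  rw [add_zero] at h
  refine h.congr' ?_
  filter_upwards [hden.eventually_gt_atTop 0] with v hv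
  rw [one_add_div hv.ne']; congr 1; ring

lemma pm_tendsto_ratio (b δ C : ℝ) (p : ℝ → ℝ) (hC : 0 < C)
    (hpos : ∀ u : ℝ, 0 < u → 0 < p u)
    (htail : Filter.Tendsto
      (fun u : ℝ => p u * (1 + u) ^ (1 + δ) * (1 + Real.log (1 + u)) ^ (1 + b))
      Filter.atTop (nhds C)) (z : ℝ) :
    Tendsto (fun v : ℝ => p (Real.exp (-z) * v) / p v) atTop
      (nhds (Real.exp ((1 + δ) * z))) := by
  set c : ℝ := Real.exp (-z) with hcdef
  have hc : 0 < c := Real.exp_pos _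
  have hcinv : c⁻¹ = Real.exp z := by rw [hcdef, Real.exp_neg, inv_inv]
  have hlin : Tendsto (fun v : ℝ => c * v) atTop atTop := tendsto_id.const_mul_atTop hc
  have h2 : Tendsto (fun v : ℝ =>
      p (c * v) * (1 + c * v) ^ (1 + δ) * (1 + Real.log (1 + c * v)) ^ (1 + b))
      atTop (nhds C) := htail.comp hlin
  have hA1 : Tendsto (fun v : ℝ => ((1 + v) / (1 + c * v)) ^ (1 + δ)) atTop
      (nhds (Real.exp ((1 + δ) * z))) := by
    have := (pm_tendsto_aux1 hc).rpow_const (p := 1 + δ) (Or.inl (by positivity))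
    rwa [hcinv, Real.rpow_def_of_pos (Real.exp_pos z), Real.log_exp, mul_comm] at this
  have hA2 : Tendsto (fun v : ℝ =>
      ((1 + Real.log (1 + v)) / (1 + Real.log (1 + c * v))) ^ (1 + b)) atTop (nhds 1) := by
    have := (pm_tendsto_aux2 hc).rpow_const (p := 1 + b) (Or.inl one_ne_zero)
    rwa [Real.one_rpow] at this
  have hAll := (h2.div htail hC.ne').mul (hA1.mul hA2)
  rw [div_self hC.ne', one_mul, mul_one] at hAll
  refine hAll.congr' ?_
  filter_upwards [eventually_gt_atTop (0 : ℝ)] with v hv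
  have hv1 : (0:ℝ) < 1 + v := by linarith
  have hcv : (0:ℝ) < c * v := by positivity
  have hcv1 : (0:ℝ) < 1 + c * v := by positivity
  have hl1 : (0:ℝ) < 1 + Real.log (1 + v) := by
    have := Real.log_nonneg (by linarith : (1:ℝ) ≤ 1 + v); linarith
  have hl2 : (0:ℝ) < 1 + Real.log (1 + c * v) := by
    have := Real.log_nonneg (by linarith : (1:ℝ) ≤ 1 + c * v); linarith
  have hp1 : (0:ℝ) < p v := hpos v hv
  have hp2 : (0:ℝ) < p (c * v) := hpos _ hcv
  have e1 : ((1 + v) / (1 + c * v)) ^ (1 + δ)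
      = (1 + v) ^ (1 + δ) / (1 + c * v) ^ (1 + δ) := Real.div_rpow hv1.le hcv1.le _
  have e2 : ((1 + Real.log (1 + v)) / (1 + Real.log (1 + c * v))) ^ (1 + b)
      = (1 + Real.log (1 + v)) ^ (1 + b) / (1 + Real.log (1 + c * v)) ^ (1 + b) :=
    Real.div_rpow hl1.le hl2.le _
  have q1 : (0:ℝ) < (1 + v) ^ (1 + δ) := Real.rpow_pos_of_pos hv1 _
  have q2 : (0:ℝ) < (1 + c * v) ^ (1 + δ) := Real.rpow_pos_of_pos hcv1 _
  have q3 : (0:ℝ) < (1 + Real.log (1 + v)) ^ (1 + b) := Real.rpow_pos_of_pos hl1 _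
  have q4 : (0:ℝ) < (1 + Real.log (1 + c * v)) ^ (1 + b) := Real.rpow_pos_of_pos hl2 _
  simp only [e1, e2, Pi.div_apply]
  field_simp

lemma pm_g_le_one (y : ℕ) {v : ℝ} (hv : 0 ≤ v) :
    v ^ y * Real.exp (-v) / (y ! : ℝ) ≤ 1 := by
  have h := Real.pow_div_factorial_le_exp v hv y
  have e : v ^ y * Real.exp (-v) / (y ! : ℝ) = v ^ y / y ! * Real.exp (-v) := by ring
  rw [e]
  calc v ^ y / (y ! : ℝ) * Real.exp (-v) ≤ Real.exp v * Real.exp (-v) :=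
        mul_le_mul_of_nonneg_right h (Real.exp_nonneg _)
    _ = 1 := by rw [← Real.exp_add]; simp

lemma pm_main {L : ℝ} (p q : ℝ → ℝ) (hpmeas : Measurable p) (hqmeas : Measurable q)
    (hint : IntegrableOn p (Ioi 0)) (hq_int : IntegrableOn q (Ioi 0))
    (hpos : ∀ u : ℝ, 0 < u → 0 < p u) (hqpos : ∀ u : ℝ, 0 < u → 0 ≤ q u)
    (hr : Tendsto (fun v : ℝ => q v / p v) atTop (nhds L)) :
    Tendsto (fun y : ℕ =>
        (∫ v in Ioi (0:ℝ), q v * (v ^ y * Real.exp (-v) / (y ! : ℝ))) /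
        (∫ v in Ioi (0:ℝ), p v * (v ^ y * Real.exp (-v) / (y ! : ℝ))))
      atTop (nhds L) := by
  set g : ℕ → ℝ → ℝ := fun y v => v ^ y * Real.exp (-v) / (y ! : ℝ) with hgdef
  have hgmeas : ∀ y, Measurable (g y) := fun y =>
    ((measurable_id.pow_const y).mul (Real.measurable_exp.comp measurable_neg)).div_const _
  have hg0 : ∀ (y : ℕ) (v : ℝ), 0 ≤ v → 0 ≤ g y v := by
    intro y v hv
    have : (0:ℝ) < y ! := by exact_mod_cast Nat.factorial_pos y
    positivity
  have hg1 : ∀ (y : ℕ) (v : ℝ), 0 ≤ v → g y v ≤ 1 := fun y v hv => pm_g_le_one y hv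
  -- integrability of products
  have hprod : ∀ (f : ℝ → ℝ), Measurable f → IntegrableOn f (Ioi 0) →
      (∀ u : ℝ, 0 < u → 0 ≤ f u) → ∀ y, IntegrableOn (fun v => f v * g y v) (Ioi 0) := by
    intro f hfm hfi hfp y
    refine hfi.mono' ((hfm.mul (hgmeas y)).aestronglyMeasurable) ?_
    filter_upwards [ae_restrict_mem measurableSet_Ioi] with v hv
    have hv0 : (0:ℝ) < v := hv
    rw [Real.norm_eq_abs, abs_of_nonneg (mul_nonneg (hfp v hv0) (hg0 y v hv0.le))]
    exact mul_le_of_le_one_right (hfp v hv0) (hg1 y v hv0.le)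
  have hpg : ∀ y, IntegrableOn (fun v => p v * g y v) (Ioi 0) :=
    hprod p hpmeas hint (fun u hu => (hpos u hu).le)
  have hqg : ∀ y, IntegrableOn (fun v => q v * g y v) (Ioi 0) :=
    hprod q hqmeas hq_int hqpos
  have hdiffint : ∀ y, IntegrableOn (fun v => (q v - L * p v) * g y v) (Ioi 0) := by
    intro y
    have h := (hqg y).sub ((hpg y).const_mul L)
    exact h.congr (ae_of_all _ fun v => by simp only [Pi.sub_apply]; ring)
  have habs : ∀ y, IntegrableOn (fun v => |(q v - L * p v) * g y v|) (Ioi 0) :=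
    fun y => (hdiffint y).abs
  set Jq : ℕ → ℝ := fun y => ∫ v in Ioi (0:ℝ), q v * g y v with hJqdef
  set J0 : ℕ → ℝ := fun y => ∫ v in Ioi (0:ℝ), p v * g y v with hJ0def
  have hkey : ∀ ε > (0:ℝ), ∀ᶠ y : ℕ in atTop, |Jq y / J0 y - L| < ε := by
    intro ε hε
    have hev : ∀ᶠ v in atTop, |q v / p v - L| < ε / 2 := by
      have := Metric.tendsto_nhds.mp hr (ε / 2) (by positivity)
      simpa [Real.dist_eq] using this
    obtain ⟨M₀, hM₀⟩ := eventually_atTop.mp hev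
    set M : ℝ := max M₀ 1 with hMdef
    have hM1 : (1:ℝ) ≤ M := le_max_right _ _
    have hM0 : (0:ℝ) < M := lt_of_lt_of_le one_pos hM1
    have hMbound : ∀ v : ℝ, M ≤ v → |q v - L * p v| ≤ ε / 2 * p v := by
      intro v hv
      have hv0 : (0:ℝ) < v := lt_of_lt_of_le hM0 hv
      have hp := hpos v hv0
      have h := hM₀ v (le_trans (le_max_left _ _) hv)
      have e : q v - L * p v = (q v / p v - L) * p v := by field_simp
      rw [e, abs_mul, abs_of_pos hp]
      exact mul_le_mul_of_nonneg_right h.le hp.le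
    set K : ℝ := 2 * M with hKdef
    have hK0 : (0:ℝ) < K := by positivity
    set cM : ℝ := ∫ v in Ioc K (K + 1), p v with hcMdef
    have hsub : Ioc K (K + 1) ⊆ Ioi 0 := fun v hv => lt_trans hK0 hv.1
    have hsub1 : Ioc (0:ℝ) M ⊆ Ioi 0 := Ioc_subset_Ioi_self
    have hsub2 : Ioi M ⊆ Ioi (0:ℝ) := Ioi_subset_Ioi hM0.le
    have hcM : 0 < cM := by
      rw [hcMdef, setIntegral_pos_iff_support_of_nonneg_ae ?nn (hint.mono_set hsub)]
      case nn =>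
        filter_upwards [ae_restrict_mem measurableSet_Ioc] with v hv
        exact (hpos v (hsub hv)).le
      have hss : Ioc K (K + 1) ⊆ Function.support p ∩ Ioc K (K + 1) :=
        fun v hv => ⟨(hpos v (hsub hv)).ne', hv⟩
      refine lt_of_lt_of_le ?_ (measure_mono hss)
      rw [Real.volume_Ioc]
      simp [ENNReal.ofReal_pos]
    set D : ℝ := (∫ v in Ioi (0:ℝ), q v) + |L| * ∫ v in Ioi (0:ℝ), p v with hDdef
    have hD0 : 0 ≤ D := by
      apply add_nonneg
      · exact setIntegral_nonneg measurableSet_Ioi fun v hv => hqpos v hv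
      · exact mul_nonneg (abs_nonneg L)
          (setIntegral_nonneg measurableSet_Ioi fun v hv => (hpos v hv).le)
    have hlow : ∀ y : ℕ, K ^ y * Real.exp (-(K + 1)) / y ! * cM ≤ J0 y := by
      intro y
      have step1 : ∫ v in Ioc K (K + 1), p v * (K ^ y * Real.exp (-(K + 1)) / y !)
          ≤ ∫ v in Ioc K (K + 1), p v * g y v := by
        refine setIntegral_mono_on ((hint.mono_set hsub).mul_const _)
          ((hpg y).mono_set hsub) measurableSet_Ioc ?_
        intro v hv
        obtain ⟨hKv, hvK⟩ := hv
        have hv0 : (0:ℝ) < v := lt_trans hK0 hKv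
        refine mul_le_mul_of_nonneg_left ?_ (hpos v hv0).le
        show K ^ y * Real.exp (-(K + 1)) / (y ! : ℝ) ≤ v ^ y * Real.exp (-v) / (y ! : ℝ)
        have e1 : K ^ y ≤ v ^ y := pow_le_pow_left₀ hK0.le hKv.le y
        have e2 : Real.exp (-(K + 1)) ≤ Real.exp (-v) := Real.exp_le_exp.mpr (by linarith)
        have hfac : (0:ℝ) < (y ! : ℝ) := by exact_mod_cast Nat.factorial_pos y
        have := mul_le_mul e1 e2 (Real.exp_pos _).le (pow_nonneg hv0.le y)
        exact div_le_div_of_nonneg_right this hfac.le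
      have step2 : ∫ v in Ioc K (K + 1), p v * g y v ≤ J0 y := by
        refine setIntegral_mono_set (hpg y) ?_ (HasSubset.Subset.eventuallyLE hsub)
        filter_upwards [ae_restrict_mem measurableSet_Ioi] with v hv
        exact mul_nonneg (hpos v hv).le (hg0 y v (le_of_lt hv))
      calc K ^ y * Real.exp (-(K + 1)) / y ! * cM
          = ∫ v in Ioc K (K + 1), p v * (K ^ y * Real.exp (-(K + 1)) / y !) := by
            rw [MeasureTheory.integral_mul_const]
            rw [hcMdef]
            ring
        _ ≤ ∫ v in Ioc K (K + 1), p v * g y v := step1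
        _ ≤ J0 y := step2
    have hJ0pos : ∀ y : ℕ, 0 < J0 y := by
      intro y
      refine lt_of_lt_of_le ?_ (hlow y)
      have : (0:ℝ) < y ! := by exact_mod_cast Nat.factorial_pos y
      positivity
    have hup : ∀ y : ℕ, |Jq y - L * J0 y| ≤ M ^ y / y ! * D + ε / 2 * J0 y := by
      intro y
      have hrepr : Jq y - L * J0 y = ∫ v in Ioi (0:ℝ), (q v - L * p v) * g y v := by
        rw [show (fun v => (q v - L * p v) * g y v)
            = fun v => q v * g y v - L * (p v * g y v) from funext fun v => by ring,
          integral_sub (hqg y) ((hpg y).const_mul L), MeasureTheory.integral_const_mul]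
      rw [hrepr]
      have part1 : ∫ v in Ioc (0:ℝ) M, |(q v - L * p v) * g y v| ≤ M ^ y / y ! * D := by
        have stepa : ∫ v in Ioc (0:ℝ) M, |(q v - L * p v) * g y v|
            ≤ ∫ v in Ioc (0:ℝ) M, (q v + |L| * p v) * (M ^ y / y !) := by
          refine setIntegral_mono_on ((habs y).mono_set hsub1)
            (((hq_int.mono_set hsub1).add ((hint.mono_set hsub1).const_mul |L|)).mul_const _)
            measurableSet_Ioc ?_
          intro v hv
          have hv0 : (0:ℝ) < v := hv.1
          have h1 : |q v - L * p v| ≤ q v + |L| * p v := by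
            refine (abs_sub _ _).trans ?_
            rw [abs_of_nonneg (hqpos v hv0), abs_mul, abs_of_nonneg (hpos v hv0).le]
          have h2 : g y v ≤ M ^ y / (y ! : ℝ) := by
            show v ^ y * Real.exp (-v) / (y ! : ℝ) ≤ M ^ y / (y ! : ℝ)
            calc v ^ y * Real.exp (-v) / (y ! : ℝ) ≤ M ^ y * 1 / (y ! : ℝ) := by
                  gcongr
                  any_goals linarith [hv.2, Real.exp_le_one_iff.mpr (by linarith [hv0] : -v ≤ 0)]
              _ = M ^ y / (y ! : ℝ) := by ring
          rw [abs_mul, abs_of_nonneg (hg0 y v hv0.le)]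
          exact mul_le_mul h1 h2 (hg0 y v hv0.le)
            (add_nonneg (hqpos v hv0) (mul_nonneg (abs_nonneg L) (hpos v hv0).le))
        have stepb : ∫ v in Ioc (0:ℝ) M, (q v + |L| * p v) * (M ^ y / y !)
            ≤ ∫ v in Ioi (0:ℝ), (q v + |L| * p v) * (M ^ y / y !) := by
          refine setIntegral_mono_set ((hq_int.add (hint.const_mul |L|)).mul_const _)
            ?_ (HasSubset.Subset.eventuallyLE hsub1)
          filter_upwards [ae_restrict_mem measurableSet_Ioi] with v hv
          have : (0:ℝ) < y ! := by exact_mod_cast Nat.factorial_pos y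
          have h0 := hqpos v hv
          have h1 := (hpos v hv).le
          positivity
        have stepc : ∫ v in Ioi (0:ℝ), (q v + |L| * p v) * (M ^ y / y !)
            = M ^ y / y ! * D := by
          rw [MeasureTheory.integral_mul_const,
            integral_add hq_int (hint.const_mul |L|), MeasureTheory.integral_const_mul,
            hDdef]
          ring
        calc ∫ v in Ioc (0:ℝ) M, |(q v - L * p v) * g y v| ≤ _ := stepa
          _ ≤ _ := stepb
          _ = M ^ y / y ! * D := stepc
      have part2 : ∫ v in Ioi M, |(q v - L * p v) * g y v| ≤ ε / 2 * J0 y := by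
        have stepa : ∫ v in Ioi M, |(q v - L * p v) * g y v|
            ≤ ∫ v in Ioi M, ε / 2 * (p v * g y v) := by
          refine setIntegral_mono_on ((habs y).mono_set hsub2)
            (((hpg y).mono_set hsub2).const_mul _) measurableSet_Ioi ?_
          intro v hv
          have hvM : M ≤ v := le_of_lt hv
          have hv0 : (0:ℝ) < v := hsub2 hv
          rw [abs_mul, abs_of_nonneg (hg0 y v hv0.le)]
          calc |q v - L * p v| * g y v ≤ ε / 2 * p v * g y v :=
                mul_le_mul_of_nonneg_right (hMbound v hvM) (hg0 y v hv0.le)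
            _ = ε / 2 * (p v * g y v) := by ring
        have stepb : ∫ v in Ioi M, ε / 2 * (p v * g y v)
            ≤ ∫ v in Ioi (0:ℝ), ε / 2 * (p v * g y v) := by
          refine setIntegral_mono_set ((hpg y).const_mul _) ?_
            (HasSubset.Subset.eventuallyLE hsub2)
          filter_upwards [ae_restrict_mem measurableSet_Ioi] with v hv
          exact mul_nonneg (by positivity) (mul_nonneg (hpos v hv).le (hg0 y v (le_of_lt hv)))
        have stepc : ∫ v in Ioi (0:ℝ), ε / 2 * (p v * g y v) = ε / 2 * J0 y := by
          rw [MeasureTheory.integral_const_mul]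
        calc ∫ v in Ioi M, |(q v - L * p v) * g y v| ≤ _ := stepa
          _ ≤ _ := stepb
          _ = ε / 2 * J0 y := stepc
      calc |∫ v in Ioi (0:ℝ), (q v - L * p v) * g y v|
          ≤ ∫ v in Ioi (0:ℝ), |(q v - L * p v) * g y v| := by
            have hni := norm_integral_le_integral_norm (μ := volume.restrict (Ioi (0:ℝ)))
              (fun v => (q v - L * p v) * g y v)
            simp only [Real.norm_eq_abs] at hni
            exact hni
        _ = (∫ v in Ioc (0:ℝ) M, |(q v - L * p v) * g y v|)
            + ∫ v in Ioi M, |(q v - L * p v) * g y v| := by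
            rw [← setIntegral_union (Ioc_disjoint_Ioi le_rfl) measurableSet_Ioi
              ((habs y).mono_set hsub1) ((habs y).mono_set hsub2),
              Ioc_union_Ioi_eq_Ioi hM0.le]
        _ ≤ M ^ y / y ! * D + ε / 2 * J0 y := add_le_add part1 part2
    have hbnd : ∀ y : ℕ, |Jq y / J0 y - L|
        ≤ D * Real.exp (K + 1) / cM * (1 / 2 : ℝ) ^ y + ε / 2 := by
      intro y
      have hJ := hJ0pos y
      have hfac : (0:ℝ) < y ! := by exact_mod_cast Nat.factorial_pos y
      have e : Jq y / J0 y - L = (Jq y - L * J0 y) / J0 y := by field_simp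
      rw [e, abs_div, abs_of_pos hJ]
      calc |Jq y - L * J0 y| / J0 y ≤ (M ^ y / y ! * D + ε / 2 * J0 y) / J0 y := by
            gcongr
            exact hup y
        _ = (M ^ y / y ! * D) / J0 y + ε / 2 := by
            rw [_root_.add_div, mul_div_cancel_right₀ _ hJ.ne']
        _ ≤ (M ^ y / y ! * D) / (K ^ y * Real.exp (-(K + 1)) / y ! * cM) + ε / 2 := by
            refine add_le_add_left ?_ _
            exact div_le_div_of_nonneg_left (by positivity) (by positivity) (hlow y)
        _ = D * Real.exp (K + 1) / cM * (1 / 2 : ℝ) ^ y + ε / 2 := by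
            rw [hKdef, mul_pow, Real.exp_neg, div_pow, one_pow]
            have hMy : (M:ℝ) ^ y ≠ 0 := pow_ne_zero _ hM0.ne'
            have h2y : (2:ℝ) ^ y ≠ 0 := pow_ne_zero _ two_ne_zero
            have hexp : Real.exp (2 * M + 1) ≠ 0 := (Real.exp_pos _).ne'
            field_simp
    have htend : Tendsto (fun y : ℕ => D * Real.exp (K + 1) / cM * (1 / 2 : ℝ) ^ y + ε / 2)
        atTop (nhds (ε / 2)) := by
      have h0 : Tendsto (fun y : ℕ => (1 / 2 : ℝ) ^ y) atTop (nhds 0) :=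
        tendsto_pow_atTop_nhds_zero_of_lt_one (by norm_num) (by norm_num)
      have := (h0.const_mul (D * Real.exp (K + 1) / cM)).add_const (ε / 2)
      simpa using this
    filter_upwards [htend.eventually_lt_const (show ε / 2 < ε by linarith)] with y hy
    exact lt_of_le_of_lt (hbnd y) hy
  rw [Metric.tendsto_nhds]
  intro ε hε
  simpa [Real.dist_eq] using hkey ε hε

/-- (Lemma S1) If the positive integrable density `p` has tail asymptotic to
`C (1+u)^{-(1+δ)} (1+log(1+u))^{-(1+b)}`, then `f_p(y; z)/f_p(y; 0) → e^{δ z}`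
as `y → ∞`. -/
theorem poissonMix_ratio_tendsto (b δ C : ℝ) (p : ℝ → ℝ)
    (hmeas : Measurable p) (hint : IntegrableOn p (Set.Ioi 0))
    (hpos : ∀ u : ℝ, 0 < u → 0 < p u) (hC : 0 < C)
    (htail : Filter.Tendsto
      (fun u : ℝ => p u * (1 + u) ^ (1 + δ) * (1 + Real.log (1 + u)) ^ (1 + b))
      Filter.atTop (nhds C)) :
    ∀ z : ℝ, Filter.Tendsto (fun y : ℕ => poissonMix p y z / poissonMix p y 0)
      Filter.atTop (nhds (Real.exp (δ * z))) := by
  intro z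
  set c : ℝ := Real.exp (-z) with hcdef
  have hc : (0:ℝ) < c := Real.exp_pos _
  set q : ℝ → ℝ := fun v => p (c * v) with hqdef
  have hqmeas : Measurable q := hmeas.comp (measurable_const_mul c)
  have hq_int : IntegrableOn q (Ioi 0) := by
    have := (integrableOn_Ioi_comp_mul_left_iff p 0 hc).mpr (by simpa using hint)
    simpa [hqdef] using this
  have hqpos : ∀ u : ℝ, 0 < u → 0 ≤ q u := fun u hu => (hpos _ (mul_pos hc hu)).le
  have hr : Tendsto (fun v : ℝ => q v / p v) atTop (nhds (Real.exp ((1 + δ) * z))) :=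
    pm_tendsto_ratio b δ C p hC hpos htail z
  have hmain := pm_main p q hmeas hqmeas hint hq_int hpos hqpos hr
  -- change of variables
  have hz : ∀ y : ℕ, poissonMix p y z
      = c * ∫ v in Ioi (0:ℝ), q v * (v ^ y * Real.exp (-v) / (y ! : ℝ)) := by
    intro y
    have hb : (0:ℝ) < Real.exp z := Real.exp_pos z
    have key : (fun u : ℝ =>
        p u * ((Real.exp z * u) ^ y * Real.exp (-(Real.exp z * u)) / (y ! : ℝ)))
        = fun u : ℝ => (fun v : ℝ => q v * (v ^ y * Real.exp (-v) / (y ! : ℝ)))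
            (Real.exp z * u) := by
      funext u
      have hcu : c * (Real.exp z * u) = u := by
        rw [hcdef, ← mul_assoc, ← Real.exp_add]
        simp
      simp only [hqdef, hcu]
    have := integral_comp_mul_left_Ioi
      (fun v : ℝ => q v * (v ^ y * Real.exp (-v) / (y ! : ℝ))) 0 hb
    rw [mul_zero] at this
    rw [poissonMix, key, this, smul_eq_mul, hcdef, Real.exp_neg]
  have h0 : ∀ y : ℕ, poissonMix p y 0
      = ∫ v in Ioi (0:ℝ), p v * (v ^ y * Real.exp (-v) / (y ! : ℝ)) := by
    intro y
    simp [poissonMix]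
  have hval : c * Real.exp ((1 + δ) * z) = Real.exp (δ * z) := by
    rw [hcdef, ← Real.exp_add]
    congr 1
    ring
  have hfinal := hmain.const_mul c
  rw [hval] at hfinal
  refine hfinal.congr ?_
  intro y
  rw [hz y, h0 y, mul_div_assoc]
end

section
/- Let a > 0, b > 0, δ ≥ 0, and define g(u) = u^{a-1} (1+u)^{-(a+δ)} (1 + log(1+u))^{-(1+b)} for u > 0. Then for all u > 0 and all z ∈ ℝ, g(u e^{-z}) / ( g(u) e^{(1+δ) z} ) = ((1+u)/(e^z + u))^{a+δ} · ((1 + log(1+u)) / (1 + log(1 + u e^{-z})))^{1+b} ≤ (max{1, e^{-z}})^{a+δ} · (1 + log(1 + e^{z}))^{1+b}. -/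
/-- The RSB-type reference density shape
`g(u) = u^{a-1} (1+u)^{-(a+δ)} (1+log(1+u))^{-(1+b)}`. -/
noncomputable def gShape (a b δ u : ℝ) : ℝ :=
  u ^ (a - 1) * (1 + u) ^ (-(a + δ)) * (1 + Real.log (1 + u)) ^ (-(1 + b))

/-- For `a, b > 0`, `δ ≥ 0`: the exact form of the scaling ratio of `g` and its
uniform bound `(max{1, e^{-z}})^{a+δ} (1 + log(1+e^z))^{1+b}`. -/
theorem gShape_scaling_ratio (a b δ : ℝ) (ha : 0 < a) (hb : 0 < b) (hδ : 0 ≤ δ)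
    (u z : ℝ) (hu : 0 < u) :
    gShape a b δ (u * Real.exp (-z)) / (gShape a b δ u * Real.exp ((1 + δ) * z))
        = ((1 + u) / (Real.exp z + u)) ^ (a + δ) *
            ((1 + Real.log (1 + u)) / (1 + Real.log (1 + u * Real.exp (-z)))) ^ (1 + b)
    ∧ ((1 + u) / (Real.exp z + u)) ^ (a + δ) *
          ((1 + Real.log (1 + u)) / (1 + Real.log (1 + u * Real.exp (-z)))) ^ (1 + b)
        ≤ (max 1 (Real.exp (-z))) ^ (a + δ) * (1 + Real.log (1 + Real.exp z)) ^ (1 + b) := by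
  have hez : (0:ℝ) < Real.exp z := Real.exp_pos z
  have hezneg : (0:ℝ) < Real.exp (-z) := Real.exp_pos _
  have hmul : Real.exp (-z) * Real.exp z = 1 := by
    rw [← Real.exp_add]; simp
  have hu' : 0 < u * Real.exp (-z) := by positivity
  have h1u : (0:ℝ) < 1 + u := by linarith
  have h1uz : (0:ℝ) < 1 + u * Real.exp (-z) := by positivity
  have hzu : (0:ℝ) < Real.exp z + u := by positivity
  have hL : (0:ℝ) < 1 + Real.log (1 + u) := by
    have := Real.log_nonneg (by linarith : (1:ℝ) ≤ 1 + u); linarith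
  have hLz : (0:ℝ) < 1 + Real.log (1 + u * Real.exp (-z)) := by
    have := Real.log_nonneg (by nlinarith : (1:ℝ) ≤ 1 + u * Real.exp (-z)); linarith
  constructor
  · unfold gShape
    rw [Real.rpow_def_of_pos hu', Real.rpow_def_of_pos h1uz, Real.rpow_def_of_pos hLz,
      Real.rpow_def_of_pos hu, Real.rpow_def_of_pos h1u, Real.rpow_def_of_pos hL,
      Real.rpow_def_of_pos (div_pos h1u hzu), Real.rpow_def_of_pos (div_pos hL hLz)]
    have e1 : Real.log (u * Real.exp (-z)) = Real.log u - z := by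
      rw [Real.log_mul hu.ne' (Real.exp_ne_zero _), Real.log_exp]; ring
    have e2 : Real.log (1 + u * Real.exp (-z)) = -z + Real.log (Real.exp z + u) := by
      have : 1 + u * Real.exp (-z) = Real.exp (-z) * (Real.exp z + u) := by
        rw [mul_add]; nlinarith
      rw [this, Real.log_mul hezneg.ne' hzu.ne', Real.log_exp]
    have e3 : Real.log ((1 + u) / (Real.exp z + u)) =
        Real.log (1 + u) - Real.log (Real.exp z + u) := Real.log_div h1u.ne' hzu.ne'
    have e4 : Real.log ((1 + Real.log (1 + u)) / (1 + Real.log (1 + u * Real.exp (-z)))) =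
        Real.log (1 + Real.log (1 + u)) - Real.log (1 + Real.log (1 + u * Real.exp (-z))) :=
      Real.log_div hL.ne' hLz.ne'
    rw [e1, e3, e4, e2, ← Real.exp_add, ← Real.exp_add, ← Real.exp_add, ← Real.exp_add,
      ← Real.exp_add, ← Real.exp_sub, ← Real.exp_add, Real.exp_eq_exp]
    ring
  · have hA : (1 + u) / (Real.exp z + u) ≤ max 1 (Real.exp (-z)) := by
      rcases le_or_gt 0 z with h | h
      · refine le_trans ?_ (le_max_left _ _)
        rw [div_le_one hzu]
        have := Real.one_le_exp h; linarith
      · refine le_trans ?_ (le_max_right _ _)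
        rw [div_le_iff₀ hzu]
        have h1 : (1:ℝ) ≤ Real.exp (-z) := Real.one_le_exp (by linarith)
        nlinarith
    have hB : (1 + Real.log (1 + u)) / (1 + Real.log (1 + u * Real.exp (-z)))
        ≤ 1 + Real.log (1 + Real.exp z) := by
      rw [div_le_iff₀ hLz]
      have key : Real.log (1 + u) ≤
          Real.log (1 + Real.exp z) + Real.log (1 + u * Real.exp (-z)) := by
        rw [← Real.log_mul (by positivity) h1uz.ne']
        apply Real.log_le_log h1u
        nlinarith
      have l1 : 0 ≤ Real.log (1 + Real.exp z) := Real.log_nonneg (by linarith)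
      have l2 : 0 ≤ Real.log (1 + u * Real.exp (-z)) := Real.log_nonneg (by nlinarith)
      nlinarith
    have hApos : 0 ≤ (1 + u) / (Real.exp z + u) := le_of_lt (div_pos h1u hzu)
    have hBpos : 0 ≤ (1 + Real.log (1 + u)) / (1 + Real.log (1 + u * Real.exp (-z))) :=
      le_of_lt (div_pos hL hLz)
    exact mul_le_mul (Real.rpow_le_rpow hApos hA (by linarith))
      (Real.rpow_le_rpow hBpos hB (by linarith))
      (Real.rpow_nonneg hBpos _)
      (Real.rpow_nonneg (le_max_of_le_left zero_le_one) _)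
end

section
/- Let a ∈ (0,1], b > 0, and define g(u) = u^{a-1} (1+u)^{-a} (1 + log(1+u))^{-(1+b)} for u > 0. Let π : (0,∞) → (0,∞) be measurable with (1/M) g(u) ≤ π(u) ≤ M g(u) for all u > 0 and some M > 0, and define f_π(y; z) = ∫₀^∞ π(u) · (e^z u)^y e^{-e^z u} / y! du. Then there exists a constant C > 0 such that for all integers y ≥ 1 and all z ∈ ℝ, f_π(y; z) / f_π(y; 0) ≤ C (1 + |z|)^{1+b}. -/
open MeasureTheory Set Filter

/-- The RSB-type reference density shape with `δ = 0`:
`g(u) = u^{a-1} (1+u)^{-a} (1+log(1+u))^{-(1+b)}`. -/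
noncomputable def gShape0 (a b u : ℝ) : ℝ :=
  u ^ (a - 1) * (1 + u) ^ (-a) * (1 + Real.log (1 + u)) ^ (-(1 + b))

section Aux

lemma aux_logpos {u : ℝ} (hu : 0 ≤ u) : 0 < 1 + Real.log (1 + u) := by
  have := Real.log_nonneg (by linarith : (1:ℝ) ≤ 1 + u); linarith

lemma gShape0_pos {a b u : ℝ} (hu : 0 < u) : 0 < gShape0 a b u := by
  have h1 : (0:ℝ) < 1 + u := by linarith
  have h2 := aux_logpos hu.le
  unfold gShape0; positivity

/-- `x^c (1+x)^{-c} ≤ 1`. -/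
lemma aux_ratio_rpow_le_one {x c : ℝ} (hx : 0 < x) (hc : 0 ≤ c) :
    x ^ c * (1 + x) ^ (-c) ≤ 1 := by
  have h1x : (0:ℝ) < 1 + x := by linarith
  rw [Real.rpow_neg h1x.le, ← div_eq_mul_inv, div_le_one (Real.rpow_pos_of_pos h1x _)]
  exact Real.rpow_le_rpow hx.le (by linarith) hc

lemma gShape0_le {a b u : ℝ} (hu : 0 < u) (ha : 0 ≤ a) (hb : 0 < b) :
    gShape0 a b u ≤ u ^ (a - 1) := by
  have h1 : (0:ℝ) < 1 + u := by linarith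
  have hA : (1 + u) ^ (-a) ≤ 1 :=
    Real.rpow_le_one_of_one_le_of_nonpos (by linarith) (by linarith)
  have hB : (1 + Real.log (1 + u)) ^ (-(1 + b)) ≤ 1 :=
    Real.rpow_le_one_of_one_le_of_nonpos
      (by have := Real.log_nonneg (by linarith : (1:ℝ) ≤ 1 + u); linarith) (by linarith)
  have hu1 : (0:ℝ) ≤ u ^ (a - 1) := Real.rpow_nonneg hu.le _
  have hA0 : (0:ℝ) ≤ (1 + u) ^ (-a) := Real.rpow_nonneg h1.le _
  calc gShape0 a b u ≤ u ^ (a - 1) * (1 + u) ^ (-a) * 1 := by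
        unfold gShape0
        exact mul_le_mul_of_nonneg_left hB (by positivity)
    _ = u ^ (a - 1) * (1 + u) ^ (-a) := mul_one _
    _ ≤ u ^ (a - 1) * 1 := mul_le_mul_of_nonneg_left hA hu1
    _ = u ^ (a - 1) := mul_one _

/-- Gamma-type integrability with rate `r`. -/
lemma aux_integrableOn_exp_neg_mul_rpow {r s : ℝ} (hr : 0 < r) (hs : 0 < s) :
    IntegrableOn (fun t : ℝ => Real.exp (-(r * t)) * t ^ (s - 1)) (Ioi 0) := by
  have h1 : IntegrableOn (fun x : ℝ => Real.exp (-(r * x)) * (r * x) ^ (s - 1)) (Ioi 0) := by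
    have := (integrableOn_Ioi_comp_mul_left_iff
      (fun x : ℝ => Real.exp (-x) * x ^ (s - 1)) 0 hr).2
      (by rw [mul_zero]; exact Real.GammaIntegral_convergent hs)
    exact this
  have h2 : IntegrableOn (fun x : ℝ => r ^ (s - 1) * (Real.exp (-(r * x)) * x ^ (s - 1)))
      (Ioi 0) := by
    refine h1.congr_fun (fun x hx => ?_) measurableSet_Ioi
    dsimp only
    rw [Real.mul_rpow hr.le (le_of_lt hx)]; ring
  have h3 := h2.const_mul ((r : ℝ) ^ (s - 1))⁻¹
  have hrs : (r : ℝ) ^ (s - 1) ≠ 0 := (Real.rpow_pos_of_pos hr _).ne'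
  have heq : (fun x : ℝ =>
      ((r:ℝ) ^ (s - 1))⁻¹ * ((r:ℝ) ^ (s - 1) * (Real.exp (-(r * x)) * x ^ (s - 1))))
      = fun t : ℝ => Real.exp (-(r * t)) * t ^ (s - 1) := by
    funext x; rw [inv_mul_cancel_left₀ hrs]
  rwa [heq] at h3

/-- Key scaling inequality. -/
lemma gShape0_scale {a b T v : ℝ} (ha0 : 0 < a) (ha1 : a ≤ 1) (hb : 0 < b)
    (hT : 0 < T) (hv : 0 < v) :
    T * gShape0 a b (T * v) ≤
      (1 + |Real.log T|) ^ (1 + b) * (v⁻¹ * (1 + Real.log (1 + v)) ^ (-(1 + b))) := by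
  have hTv : 0 < T * v := mul_pos hT hv
  have h1Tv : (0:ℝ) < 1 + T * v := by linarith
  have h1v : (0:ℝ) < 1 + v := by linarith
  have hX : 0 < 1 + Real.log (1 + v) := aux_logpos hv.le
  have hY : 0 < 1 + Real.log (1 + T * v) := aux_logpos hTv.le
  have hc : (1:ℝ) ≤ 1 + |Real.log T| := by have := abs_nonneg (Real.log T); linarith
  have hcpos : (0:ℝ) < 1 + |Real.log T| := by linarith
  have hβ : (1:ℝ) ≤ (1 + |Real.log T|) ^ (1 + b) :=
    Real.one_le_rpow hc (by linarith)
  unfold gShape0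
  rcases le_total T 1 with hT1 | hT1
  · -- T ≤ 1
    have step1 : T * ((T * v) ^ (a - 1) * (1 + T * v) ^ (-a)) ≤
        v ^ (a - 1) * (1 + v) ^ (-a) := by
      have e1 : (T * v) ^ (a - 1) = T ^ (a - 1) * v ^ (a - 1) :=
        Real.mul_rpow hT.le hv.le
      have e2 : (1 + T * v) ^ (-a) ≤ T ^ (-a) * (1 + v) ^ (-a) := by
        rw [← Real.mul_rpow hT.le h1v.le]
        exact Real.rpow_le_rpow_of_nonpos (by nlinarith) (by nlinarith) (by linarith)
      have e4 : T * T ^ (a - 1) * T ^ (-a) = 1 := by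
        nth_rewrite 1 [← Real.rpow_one T]
        rw [← Real.rpow_add hT, ← Real.rpow_add hT,
          show (1:ℝ) + (a - 1) + -a = 0 by ring, Real.rpow_zero]
      calc T * ((T * v) ^ (a - 1) * (1 + T * v) ^ (-a))
          ≤ T * (T ^ (a - 1) * v ^ (a - 1) * (T ^ (-a) * (1 + v) ^ (-a))) := by
            rw [e1]
            refine mul_le_mul_of_nonneg_left (mul_le_mul_of_nonneg_left e2 ?_) hT.le
            positivity
        _ = (T * T ^ (a - 1) * T ^ (-a)) * (v ^ (a - 1) * (1 + v) ^ (-a)) := by ring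
        _ = v ^ (a - 1) * (1 + v) ^ (-a) := by rw [e4, one_mul]
    have step1b : v ^ (a - 1) * (1 + v) ^ (-a) ≤ v⁻¹ := by
      have e5 : v ^ (a - 1) = v ^ a * v⁻¹ := by
        rw [show a - 1 = a + (-1) by ring, Real.rpow_add hv, Real.rpow_neg_one]
      calc v ^ (a - 1) * (1 + v) ^ (-a) = (v ^ a * (1 + v) ^ (-a)) * v⁻¹ := by
            rw [e5]; ring
        _ ≤ 1 * v⁻¹ := by
            refine mul_le_mul_of_nonneg_right (aux_ratio_rpow_le_one hv ha0.le) ?_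
            positivity
        _ = v⁻¹ := one_mul _
    have step2 : (1 + Real.log (1 + T * v)) ^ (-(1 + b)) ≤
        (1 + |Real.log T|) ^ (1 + b) * (1 + Real.log (1 + v)) ^ (-(1 + b)) := by
      have hinv : (1:ℝ) ≤ T⁻¹ := by
        have h7 := mul_inv_cancel₀ hT.ne'
        nlinarith [inv_pos.2 hT]
      have hXY : 1 + Real.log (1 + v) ≤
          (1 + |Real.log T|) * (1 + Real.log (1 + T * v)) := by
        have h6 : 1 + v ≤ T⁻¹ * (1 + T * v) := by
          have e6 : T⁻¹ * (1 + T * v) = T⁻¹ + v := by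
            rw [mul_add, mul_one, inv_mul_cancel_left₀ hT.ne']
          rw [e6]; linarith
        have hlog : Real.log (1 + v) ≤ |Real.log T| + Real.log (1 + T * v) := by
          have h8 := Real.log_le_log h1v h6
          rw [Real.log_mul (by positivity) h1Tv.ne', Real.log_inv] at h8
          have : -Real.log T ≤ |Real.log T| := neg_le_abs _
          linarith
        nlinarith [Real.log_nonneg (by linarith : (1:ℝ) ≤ 1 + T * v),
          abs_nonneg (Real.log T)]
      have h5 : ((1 + |Real.log T|) * (1 + Real.log (1 + T * v))) ^ (-(1 + b)) ≤
          (1 + Real.log (1 + v)) ^ (-(1 + b)) :=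
        Real.rpow_le_rpow_of_nonpos hX hXY (by linarith)
      rw [Real.mul_rpow hcpos.le hY.le] at h5
      have hcc : (1 + |Real.log T|) ^ (1 + b) * (1 + |Real.log T|) ^ (-(1 + b)) = 1 := by
        rw [← Real.rpow_add hcpos, show (1 + b) + -(1 + b) = 0 by ring, Real.rpow_zero]
      calc (1 + Real.log (1 + T * v)) ^ (-(1 + b))
          = (1 + |Real.log T|) ^ (1 + b) *
            ((1 + |Real.log T|) ^ (-(1 + b)) * (1 + Real.log (1 + T * v)) ^ (-(1 + b))) := by
            rw [← mul_assoc, hcc, one_mul]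
        _ ≤ (1 + |Real.log T|) ^ (1 + b) * (1 + Real.log (1 + v)) ^ (-(1 + b)) :=
            mul_le_mul_of_nonneg_left h5 (Real.rpow_nonneg hcpos.le _)
    calc T * ((T * v) ^ (a - 1) * (1 + T * v) ^ (-a) * (1 + Real.log (1 + T * v)) ^ (-(1 + b)))
        = (T * ((T * v) ^ (a - 1) * (1 + T * v) ^ (-a))) *
          (1 + Real.log (1 + T * v)) ^ (-(1 + b)) := by ring
      _ ≤ v⁻¹ * ((1 + |Real.log T|) ^ (1 + b) * (1 + Real.log (1 + v)) ^ (-(1 + b))) :=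
          mul_le_mul (step1.trans step1b) step2 (Real.rpow_nonneg hY.le _) (by positivity)
      _ = (1 + |Real.log T|) ^ (1 + b) * (v⁻¹ * (1 + Real.log (1 + v)) ^ (-(1 + b))) := by
          ring
  · -- 1 ≤ T
    have step1 : T * ((T * v) ^ (a - 1) * (1 + T * v) ^ (-a)) ≤ v⁻¹ := by
      have e1 : (T * v) ^ (a - 1) = (T * v) ^ a * (T * v)⁻¹ := by
        rw [show a - 1 = a + (-1) by ring, Real.rpow_add hTv, Real.rpow_neg_one]
      have e2 : T * (T * v)⁻¹ = v⁻¹ := by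
        rw [mul_inv, ← mul_assoc, mul_inv_cancel₀ hT.ne', one_mul]
      calc T * ((T * v) ^ (a - 1) * (1 + T * v) ^ (-a))
          = ((T * v) ^ a * (1 + T * v) ^ (-a)) * (T * (T * v)⁻¹) := by rw [e1]; ring
        _ = ((T * v) ^ a * (1 + T * v) ^ (-a)) * v⁻¹ := by rw [e2]
        _ ≤ 1 * v⁻¹ := by
            refine mul_le_mul_of_nonneg_right (aux_ratio_rpow_le_one hTv ha0.le) ?_
            positivity
        _ = v⁻¹ := one_mul _
    have step2 : (1 + Real.log (1 + T * v)) ^ (-(1 + b)) ≤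
        (1 + Real.log (1 + v)) ^ (-(1 + b)) := by
      refine Real.rpow_le_rpow_of_nonpos hX ?_ (by linarith)
      have : (1:ℝ) + v ≤ 1 + T * v := by nlinarith
      linarith [Real.log_le_log h1v this]
    calc T * ((T * v) ^ (a - 1) * (1 + T * v) ^ (-a) * (1 + Real.log (1 + T * v)) ^ (-(1 + b)))
        = (T * ((T * v) ^ (a - 1) * (1 + T * v) ^ (-a))) *
          (1 + Real.log (1 + T * v)) ^ (-(1 + b)) := by ring
      _ ≤ v⁻¹ * (1 + Real.log (1 + v)) ^ (-(1 + b)) :=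
          mul_le_mul step1 step2 (Real.rpow_nonneg hY.le _) (by positivity)
      _ ≤ (1 + |Real.log T|) ^ (1 + b) *
          (v⁻¹ * (1 + Real.log (1 + v)) ^ (-(1 + b))) := by
          refine le_mul_of_one_le_left ?_ hβ
          positivity

end Aux
section Part2

lemma aux_measurable_rpow_const (c : ℝ) : Measurable (fun x : ℝ => x ^ c) :=
  measurable_of_measurable_on_compl_singleton 0
    (Continuous.measurable <| continuousOn_iff_continuous_restrict.1 <|
      fun x hx => (Real.continuousAt_rpow_const x c (Or.inl hx)).continuousWithinAt)

lemma integrable_mix {a b M : ℝ} (ha0 : 0 < a) (hb : 0 < b) (hM : 0 < M)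
    {p : ℝ → ℝ} (hmeas : Measurable p)
    (hpos : ∀ u : ℝ, 0 < u → 0 < p u)
    (hup : ∀ u : ℝ, 0 < u → p u ≤ M * gShape0 a b u)
    (y : ℕ) {c : ℝ} (hc : 0 < c) :
    IntegrableOn (fun u : ℝ => p u * ((c * u) ^ y * Real.exp (-(c * u)) / (y.factorial : ℝ)))
      (Ioi 0) := by
  have hfac : (0:ℝ) < (y.factorial : ℝ) := by exact_mod_cast y.factorial_pos
  refine Integrable.mono' (g := fun u => (M * c ^ y / (y.factorial : ℝ)) *
      (Real.exp (-(c * u)) * u ^ (((y:ℝ) + a) - 1)))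
      ((aux_integrableOn_exp_neg_mul_rpow hc (by positivity)).const_mul _) ?_ ?_
  · exact (hmeas.mul (by fun_prop)).aestronglyMeasurable
  · filter_upwards [ae_restrict_mem measurableSet_Ioi] with u hu
    have hu0 : (0:ℝ) < u := hu
    have hk0 : 0 ≤ (c * u) ^ y * Real.exp (-(c * u)) / (y.factorial : ℝ) := by positivity
    rw [Real.norm_eq_abs, abs_of_nonneg (mul_nonneg (hpos u hu0).le hk0)]
    have h1 : p u * ((c * u) ^ y * Real.exp (-(c * u)) / (y.factorial : ℝ)) ≤
        (M * gShape0 a b u) * ((c * u) ^ y * Real.exp (-(c * u)) / (y.factorial : ℝ)) :=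
      mul_le_mul_of_nonneg_right (hup u hu0) hk0
    have h2 : (M * gShape0 a b u) * ((c * u) ^ y * Real.exp (-(c * u)) / (y.factorial : ℝ)) ≤
        (M * u ^ (a - 1)) * ((c * u) ^ y * Real.exp (-(c * u)) / (y.factorial : ℝ)) :=
      mul_le_mul_of_nonneg_right
        (mul_le_mul_of_nonneg_left (gShape0_le hu0 ha0.le hb) hM.le) hk0
    refine (h1.trans h2).trans (le_of_eq ?_)
    have e2 : u ^ (a - 1) * (u : ℝ) ^ (y : ℕ) = u ^ (((y:ℝ) + a) - 1) := by
      rw [← Real.rpow_natCast u y, ← Real.rpow_add hu0,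
        show (a - 1) + (y:ℝ) = ((y:ℝ) + a) - 1 by ring]
    rw [mul_pow c u y,
      show (M * u ^ (a-1)) * (c ^ y * u ^ y * Real.exp (-(c*u)) / (y.factorial : ℝ))
        = (M * c ^ y / (y.factorial : ℝ)) * (Real.exp (-(c*u)) * (u ^ (a-1) * u ^ y)) by ring, e2]

lemma integrable_hPo {b : ℝ} (hb : 0 < b) {y : ℕ} (hy : 1 ≤ y) :
    IntegrableOn (fun v : ℝ => v⁻¹ * (1 + Real.log (1 + v)) ^ (-(1 + b)) *
      (v ^ y * Real.exp (-v) / (y.factorial : ℝ))) (Ioi 0) := by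
  have hfac : (0:ℝ) < (y.factorial : ℝ) := by exact_mod_cast y.factorial_pos
  have hy0 : (0:ℝ) < (y : ℝ) := by exact_mod_cast hy
  have hint : IntegrableOn (fun t : ℝ => Real.exp (-(1 * t)) * t ^ ((y:ℝ) - 1)) (Ioi 0) :=
    aux_integrableOn_exp_neg_mul_rpow one_pos hy0
  refine Integrable.mono' (g := fun v => (y.factorial : ℝ)⁻¹ *
      (Real.exp (-(1 * v)) * v ^ ((y:ℝ) - 1))) (hint.const_mul _) ?_ ?_
  · refine ((measurable_inv.mul ((aux_measurable_rpow_const (-(1+b))).comp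
      (measurable_const.add (Real.measurable_log.comp
        (measurable_const.add measurable_id))))).mul
      (by fun_prop : Measurable (fun v : ℝ =>
        v ^ y * Real.exp (-v) / (y.factorial : ℝ)))).aestronglyMeasurable
  · filter_upwards [ae_restrict_mem measurableSet_Ioi] with v hv
    have hv0 : (0:ℝ) < v := hv
    have hL : 0 < 1 + Real.log (1 + v) := aux_logpos hv0.le
    have hlogv : 0 ≤ Real.log (1 + v) := Real.log_nonneg (by linarith)
    have hL1 : (1 + Real.log (1 + v)) ^ (-(1 + b)) ≤ 1 :=
      Real.rpow_le_one_of_one_le_of_nonpos (by linarith) (by linarith)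
    have hnn : 0 ≤ v⁻¹ * (1 + Real.log (1 + v)) ^ (-(1 + b)) *
        (v ^ y * Real.exp (-v) / (y.factorial : ℝ)) := by positivity
    rw [Real.norm_eq_abs, abs_of_nonneg hnn]
    have e2 : v⁻¹ * (v : ℝ) ^ (y : ℕ) = v ^ ((y:ℝ) - 1) := by
      rw [← Real.rpow_natCast v y, ← Real.rpow_neg_one v, ← Real.rpow_add hv0,
        show (-1:ℝ) + (y:ℝ) = (y:ℝ) - 1 by ring]
    calc v⁻¹ * (1 + Real.log (1 + v)) ^ (-(1 + b)) * (v ^ y * Real.exp (-v) / (y.factorial : ℝ))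
        = (1 + Real.log (1 + v)) ^ (-(1 + b)) *
          ((v⁻¹ * v ^ y) * Real.exp (-v) * (y.factorial : ℝ)⁻¹) := by
          rw [div_eq_mul_inv]; ring
      _ = (1 + Real.log (1 + v)) ^ (-(1 + b)) *
          (v ^ ((y:ℝ) - 1) * Real.exp (-v) * (y.factorial : ℝ)⁻¹) := by rw [e2]
      _ ≤ 1 * (v ^ ((y:ℝ) - 1) * Real.exp (-v) * (y.factorial : ℝ)⁻¹) :=
          mul_le_mul_of_nonneg_right hL1 (by positivity)
      _ = (y.factorial : ℝ)⁻¹ * (Real.exp (-(1 * v)) * v ^ ((y:ℝ) - 1)) := by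
          simp only [one_mul]; ring

end Part2
set_option maxHeartbeats 1000000
/-- If `p` is comparable to the RSB-type shape `gShape0 a b`, then the ratio
`f_p(y; z)/f_p(y; 0)` grows at most like `(1+|z|)^{1+b}`, uniformly in `y ≥ 1`. -/
theorem poissonMix_ratio_polylog_bound (a b M : ℝ) (ha : a ∈ Set.Ioc (0 : ℝ) 1)
    (hb : 0 < b) (hM : 0 < M) (p : ℝ → ℝ) (hmeas : Measurable p)
    (hlow : ∀ u : ℝ, 0 < u → gShape0 a b u / M ≤ p u)
    (hup : ∀ u : ℝ, 0 < u → p u ≤ M * gShape0 a b u) :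
    ∃ C : ℝ, 0 < C ∧ ∀ y : ℕ, 1 ≤ y → ∀ z : ℝ,
      poissonMix p y z / poissonMix p y 0 ≤ C * (1 + |z|) ^ (1 + b) := by
  obtain ⟨ha0, ha1⟩ := ha
  have hlog3 : (0:ℝ) ≤ Real.log 3 := Real.log_nonneg (by norm_num)
  have h1log3 : (0:ℝ) < 1 + Real.log 3 := by linarith
  set c₀ : ℝ := 6⁻¹ * (1 + Real.log 3) ^ (-(1 + b)) with hc₀def
  have hc₀ : 0 < c₀ := by rw [hc₀def]; positivity
  refine ⟨M ^ 2 * (Real.exp 2 / c₀ + 2), by positivity, ?_⟩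
  intro y hy z
  have hfac : (0:ℝ) < (y.factorial : ℝ) := by exact_mod_cast y.factorial_pos
  have hppos : ∀ u : ℝ, 0 < u → 0 < p u := fun u hu =>
    lt_of_lt_of_le (div_pos (gShape0_pos hu) hM) (hlow u hu)
  set β := (1 + |z|) ^ (1 + b) with hβdef
  have hβ1 : (1:ℝ) ≤ β := by
    rw [hβdef]; exact Real.one_le_rpow (by linarith [abs_nonneg z]) (by linarith)
  -- the denominator
  have hDdef : poissonMix p y 0
      = ∫ u in Ioi (0:ℝ), p u * (u ^ y * Real.exp (-u) / (y.factorial : ℝ)) := by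
    unfold poissonMix
    norm_num [Real.exp_zero]
  have hDint : IntegrableOn
      (fun u : ℝ => p u * (u ^ y * Real.exp (-u) / (y.factorial : ℝ))) (Ioi 0) := by
    refine (integrable_mix ha0 hb hM hmeas hppos hup y one_pos).congr_fun
      (fun u _ => ?_) measurableSet_Ioi
    norm_num
  have hDnn : 0 ≤ᵐ[volume.restrict (Ioi (0:ℝ))]
      fun u => p u * (u ^ y * Real.exp (-u) / (y.factorial : ℝ)) := by
    filter_upwards [ae_restrict_mem measurableSet_Ioi] with u hu
    have hu0 : (0:ℝ) < u := hu
    have := hppos u hu0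
    positivity
  -- lower bound for the denominator
  have hκle : c₀ * Real.exp (-2) / (M * (y.factorial : ℝ)) ≤ poissonMix p y 0 := by
    rw [hDdef]
    have hsub : Ioc (1:ℝ) 2 ⊆ Ioi (0:ℝ) := fun x hx => lt_trans zero_lt_one hx.1
    refine le_trans ?_ (setIntegral_mono_set hDint hDnn
      (HasSubset.Subset.eventuallyLE hsub))
    have hvol : (volume (Ioc (1:ℝ) 2)).toReal = 1 := by
      rw [Real.volume_Ioc]; norm_num
    have hconst : (∫ _ in Ioc (1:ℝ) 2, c₀ * Real.exp (-2) / (M * (y.factorial : ℝ))) =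
        c₀ * Real.exp (-2) / (M * (y.factorial : ℝ)) := by
      rw [setIntegral_const, measureReal_def, hvol, one_smul]
    rw [← hconst]
    refine setIntegral_mono_on (integrableOn_const measure_Ioc_lt_top.ne)
      (hDint.mono_set hsub) measurableSet_Ioc ?_
    intro v hv
    obtain ⟨hv1, hv2⟩ := hv
    have hv0 : (0:ℝ) < v := by linarith
    have hg : c₀ ≤ gShape0 a b v := by
      have f1 : (2:ℝ)⁻¹ ≤ v ^ (a - 1) := by
        have i1 : (2:ℝ) ^ (a - 1) ≤ v ^ (a - 1) :=
          Real.rpow_le_rpow_of_nonpos hv0 hv2 (by linarith)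
        have i2 : (2:ℝ) ^ (-1:ℝ) ≤ (2:ℝ) ^ (a - 1) :=
          Real.rpow_le_rpow_of_exponent_le one_le_two (by linarith)
        rw [Real.rpow_neg_one] at i2
        linarith
      have f2 : (3:ℝ)⁻¹ ≤ (1 + v) ^ (-a) := by
        have i1 : (3:ℝ) ^ (-a) ≤ (1 + v) ^ (-a) :=
          Real.rpow_le_rpow_of_nonpos (by linarith) (by linarith) (by linarith)
        have i2 : (3:ℝ) ^ (-1:ℝ) ≤ (3:ℝ) ^ (-a) :=
          Real.rpow_le_rpow_of_exponent_le (by norm_num) (by linarith)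
        rw [Real.rpow_neg_one] at i2
        linarith
      have f3 : (1 + Real.log 3) ^ (-(1 + b)) ≤ (1 + Real.log (1 + v)) ^ (-(1 + b)) := by
        refine Real.rpow_le_rpow_of_nonpos (aux_logpos hv0.le) ?_ (by linarith)
        have := Real.log_le_log (by linarith : (0:ℝ) < 1 + v) (by linarith : 1 + v ≤ 3)
        linarith
      have hgnn1 : (0:ℝ) ≤ v ^ (a - 1) := Real.rpow_nonneg hv0.le _
      calc c₀ = (2⁻¹ * 3⁻¹) * (1 + Real.log 3) ^ (-(1 + b)) := by rw [hc₀def]; norm_num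
        _ ≤ (v ^ (a - 1) * (1 + v) ^ (-a)) * (1 + Real.log (1 + v)) ^ (-(1 + b)) := by
            refine mul_le_mul (mul_le_mul f1 f2 (by norm_num) hgnn1) f3
              (Real.rpow_nonneg h1log3.le _) (by positivity)
        _ = gShape0 a b v := by unfold gShape0; ring
    have hpv : c₀ / M ≤ p v := le_trans (by gcongr) (hlow v hv0)
    have hk : Real.exp (-2) / (y.factorial : ℝ) ≤
        v ^ y * Real.exp (-v) / (y.factorial : ℝ) := by
      have k1 : (1:ℝ) ≤ v ^ y := one_le_pow₀ (by linarith)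
      have k2 : Real.exp (-2) ≤ Real.exp (-v) := Real.exp_le_exp.2 (by linarith)
      have k3 : Real.exp (-2) ≤ v ^ y * Real.exp (-v) := by nlinarith [Real.exp_pos (-v)]
      gcongr
    calc c₀ * Real.exp (-2) / (M * (y.factorial : ℝ))
        = (c₀ / M) * (Real.exp (-2) / (y.factorial : ℝ)) := by ring
      _ ≤ p v * (v ^ y * Real.exp (-v) / (y.factorial : ℝ)) :=
          mul_le_mul hpv hk (by positivity) (hppos v hv0).le
  have hD0 : 0 < poissonMix p y 0 := lt_of_lt_of_le (by positivity) hκle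
  -- change of variables in the numerator
  have hN : poissonMix p y z = ∫ v in Ioi (0:ℝ),
      Real.exp (-z) * (p (Real.exp (-z) * v) *
        (v ^ y * Real.exp (-v) / (y.factorial : ℝ))) := by
    unfold poissonMix
    calc (∫ u in Ioi (0:ℝ),
          p u * ((Real.exp z * u) ^ y * Real.exp (-(Real.exp z * u)) / (y.factorial : ℝ)))
        = ∫ u in Ioi (0:ℝ), (fun w => p (Real.exp (-z) * w) *
            (w ^ y * Real.exp (-w) / (y.factorial : ℝ))) (Real.exp z * u) := by
          refine setIntegral_congr_fun measurableSet_Ioi fun u _ => ?_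
          simp only
          rw [← mul_assoc, ← Real.exp_add, neg_add_cancel, Real.exp_zero, one_mul]
      _ = (Real.exp z)⁻¹ • ∫ w in Ioi (Real.exp z * 0),
            p (Real.exp (-z) * w) * (w ^ y * Real.exp (-w) / (y.factorial : ℝ)) :=
          integral_comp_mul_left_Ioi
            (fun w => p (Real.exp (-z) * w) * (w ^ y * Real.exp (-w) / (y.factorial : ℝ)))
            0 (Real.exp_pos z)
      _ = ∫ v in Ioi (0:ℝ), Real.exp (-z) * (p (Real.exp (-z) * v) *
            (v ^ y * Real.exp (-v) / (y.factorial : ℝ))) := by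
          rw [mul_zero, smul_eq_mul, ← Real.exp_neg, ← integral_const_mul]
  -- pointwise domination
  have hmain : poissonMix p y z ≤ M * β * ∫ v in Ioi (0:ℝ),
      v⁻¹ * (1 + Real.log (1 + v)) ^ (-(1 + b)) *
        (v ^ y * Real.exp (-v) / (y.factorial : ℝ)) := by
    rw [hN, ← integral_const_mul]
    refine integral_mono_of_nonneg ?_ ((integrable_hPo hb hy).const_mul (M * β)) ?_
    · filter_upwards [ae_restrict_mem measurableSet_Ioi] with v hv
      have hv0 : (0:ℝ) < v := hv
      have hp0 := (hppos _ (mul_pos (Real.exp_pos (-z)) hv0)).le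
      exact mul_nonneg (Real.exp_pos (-z)).le (mul_nonneg hp0 (by positivity))
    · filter_upwards [ae_restrict_mem measurableSet_Ioi] with v hv
      have hv0 : (0:ℝ) < v := hv
      have hTv0 : 0 < Real.exp (-z) * v := mul_pos (Real.exp_pos _) hv0
      have hk0 : (0:ℝ) ≤ v ^ y * Real.exp (-v) / (y.factorial : ℝ) := by positivity
      have h2 := gShape0_scale ha0 ha1 hb (Real.exp_pos (-z)) hv0
      rw [Real.log_exp, abs_neg, ← hβdef] at h2
      have h1 : Real.exp (-z) * p (Real.exp (-z) * v) ≤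
          Real.exp (-z) * (M * gShape0 a b (Real.exp (-z) * v)) :=
        mul_le_mul_of_nonneg_left (hup _ hTv0) (Real.exp_pos _).le
      calc Real.exp (-z) * (p (Real.exp (-z) * v) *
            (v ^ y * Real.exp (-v) / (y.factorial : ℝ)))
          = (Real.exp (-z) * p (Real.exp (-z) * v)) *
            (v ^ y * Real.exp (-v) / (y.factorial : ℝ)) := by ring
        _ ≤ (Real.exp (-z) * (M * gShape0 a b (Real.exp (-z) * v))) *
            (v ^ y * Real.exp (-v) / (y.factorial : ℝ)) :=
            mul_le_mul_of_nonneg_right h1 hk0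
        _ = (M * (Real.exp (-z) * gShape0 a b (Real.exp (-z) * v))) *
            (v ^ y * Real.exp (-v) / (y.factorial : ℝ)) := by ring
        _ ≤ (M * (β * (v⁻¹ * (1 + Real.log (1 + v)) ^ (-(1 + b))))) *
            (v ^ y * Real.exp (-v) / (y.factorial : ℝ)) :=
            mul_le_mul_of_nonneg_right (mul_le_mul_of_nonneg_left h2 hM.le) hk0
        _ = M * β * (v⁻¹ * (1 + Real.log (1 + v)) ^ (-(1 + b)) *
            (v ^ y * Real.exp (-v) / (y.factorial : ℝ))) := by ring
  -- splitting the comparison integral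
  have hsplit : (∫ v in Ioi (0:ℝ),
      v⁻¹ * (1 + Real.log (1 + v)) ^ (-(1 + b)) *
        (v ^ y * Real.exp (-v) / (y.factorial : ℝ)))
      ≤ (y.factorial : ℝ)⁻¹ + 2 * M * poissonMix p y 0 := by
    have hint := integrable_hPo hb hy (b := b)
    have hIoc := hint.mono_set (Ioc_subset_Ioi_self : Ioc (0:ℝ) 1 ⊆ Ioi 0)
    have hIoi1 := hint.mono_set (Ioi_subset_Ioi (zero_le_one : (0:ℝ) ≤ 1))
    rw [← Ioc_union_Ioi_eq_Ioi (zero_le_one : (0:ℝ) ≤ 1),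
      setIntegral_union (Ioc_disjoint_Ioi le_rfl) measurableSet_Ioi hIoc hIoi1]
    have part1 : (∫ v in Ioc (0:ℝ) 1, v⁻¹ * (1 + Real.log (1 + v)) ^ (-(1 + b)) *
        (v ^ y * Real.exp (-v) / (y.factorial : ℝ))) ≤ (y.factorial : ℝ)⁻¹ := by
      have hconst : IntegrableOn (fun _ : ℝ => (y.factorial : ℝ)⁻¹) (Ioc (0:ℝ) 1) :=
        integrableOn_const measure_Ioc_lt_top.ne
      have hpt : ∀ v ∈ Ioc (0:ℝ) 1, v⁻¹ * (1 + Real.log (1 + v)) ^ (-(1 + b)) *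
          (v ^ y * Real.exp (-v) / (y.factorial : ℝ)) ≤ (y.factorial : ℝ)⁻¹ := by
        intro v hv
        obtain ⟨hv0, hv1⟩ := hv
        obtain ⟨m, hm⟩ : ∃ m, y = m + 1 := ⟨y - 1, (Nat.succ_pred_eq_of_pos hy).symm⟩
        have hL : 0 < 1 + Real.log (1 + v) := aux_logpos hv0.le
        have hlogv : 0 ≤ Real.log (1 + v) := Real.log_nonneg (by linarith)
        have hA1 : (1 + Real.log (1 + v)) ^ (-(1 + b)) ≤ 1 :=
          Real.rpow_le_one_of_one_le_of_nonpos (by linarith) (by linarith)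
        have hA0 : (0:ℝ) ≤ (1 + Real.log (1 + v)) ^ (-(1 + b)) :=
          Real.rpow_nonneg hL.le _
        have hB1 : v ^ m ≤ 1 := pow_le_one₀ hv0.le hv1
        have hB0 : (0:ℝ) ≤ v ^ m := pow_nonneg hv0.le m
        have hC1 : Real.exp (-v) ≤ 1 := by
          rw [← Real.exp_zero]; exact Real.exp_le_exp.2 (by linarith)
        have hC0 := (Real.exp_pos (-v)).le
        have e2 : v⁻¹ * v ^ y = v ^ m := by
          calc v⁻¹ * v ^ y = (v⁻¹ * v) * v ^ m := by rw [hm, pow_succ]; ring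
            _ = v ^ m := by rw [inv_mul_cancel₀ hv0.ne', one_mul]
        have habc : (1 + Real.log (1 + v)) ^ (-(1 + b)) * v ^ m * Real.exp (-v) ≤ 1 := by
          have h12 : (1 + Real.log (1 + v)) ^ (-(1 + b)) * v ^ m ≤ 1 := by nlinarith
          nlinarith [mul_nonneg hA0 hB0]
        calc v⁻¹ * (1 + Real.log (1 + v)) ^ (-(1 + b)) *
            (v ^ y * Real.exp (-v) / (y.factorial : ℝ))
            = ((1 + Real.log (1 + v)) ^ (-(1 + b)) * (v⁻¹ * v ^ y) * Real.exp (-v)) *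
              (y.factorial : ℝ)⁻¹ := by rw [div_eq_mul_inv]; ring
          _ = ((1 + Real.log (1 + v)) ^ (-(1 + b)) * v ^ m * Real.exp (-v)) *
              (y.factorial : ℝ)⁻¹ := by rw [e2]
          _ ≤ 1 * (y.factorial : ℝ)⁻¹ := mul_le_mul_of_nonneg_right habc (by positivity)
          _ = (y.factorial : ℝ)⁻¹ := one_mul _
      refine (setIntegral_mono_on hIoc hconst measurableSet_Ioc hpt).trans (le_of_eq ?_)
      rw [setIntegral_const, measureReal_def, Real.volume_Ioc]
      norm_num
    have part2 : (∫ v in Ioi (1:ℝ), v⁻¹ * (1 + Real.log (1 + v)) ^ (-(1 + b)) *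
        (v ^ y * Real.exp (-v) / (y.factorial : ℝ))) ≤ 2 * M * poissonMix p y 0 := by
      have hDint1 := hDint.mono_set (Ioi_subset_Ioi (zero_le_one : (0:ℝ) ≤ 1))
      have hpt : ∀ v ∈ Ioi (1:ℝ), v⁻¹ * (1 + Real.log (1 + v)) ^ (-(1 + b)) *
          (v ^ y * Real.exp (-v) / (y.factorial : ℝ)) ≤
          2 * M * (p v * (v ^ y * Real.exp (-v) / (y.factorial : ℝ))) := by
        intro v hv
        have hv1 : (1:ℝ) < v := hv
        have hv0 : (0:ℝ) < v := by linarith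
        have h1v : (0:ℝ) < 1 + v := by linarith
        have hL := aux_logpos hv0.le
        have key : v⁻¹ ≤ 2 * (v ^ (a - 1) * (1 + v) ^ (-a)) := by
          have h1 : (1 + v) ^ a ≤ 2 * v ^ a := by
            calc (1 + v) ^ a ≤ (2 * v) ^ a :=
                Real.rpow_le_rpow h1v.le (by linarith) ha0.le
              _ = 2 ^ a * v ^ a := Real.mul_rpow (by norm_num) hv0.le
              _ ≤ 2 * v ^ a := by
                  refine mul_le_mul_of_nonneg_right ?_ (Real.rpow_nonneg hv0.le _)
                  calc (2:ℝ) ^ a ≤ (2:ℝ) ^ (1:ℝ) :=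
                      Real.rpow_le_rpow_of_exponent_le one_le_two ha1
                    _ = 2 := Real.rpow_one 2
          have e7 : v ^ (a - 1) = v ^ a * v⁻¹ := by
            rw [show a - 1 = a + (-1) by ring, Real.rpow_add hv0, Real.rpow_neg_one]
          have e8 : (1 + v) ^ a * (1 + v) ^ (-a) = 1 := by
            rw [← Real.rpow_add h1v, show a + -a = 0 by ring, Real.rpow_zero]
          calc v⁻¹ = ((1 + v) ^ a * (1 + v) ^ (-a)) * v⁻¹ := by rw [e8, one_mul]
            _ = (1 + v) ^ a * ((1 + v) ^ (-a) * v⁻¹) := by ring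
            _ ≤ (2 * v ^ a) * ((1 + v) ^ (-a) * v⁻¹) := by
                refine mul_le_mul_of_nonneg_right h1 ?_
                positivity
            _ = 2 * (v ^ (a - 1) * (1 + v) ^ (-a)) := by rw [e7]; ring
        have hgp : gShape0 a b v ≤ M * p v := by
          have h9 := hlow v hv0
          rw [div_le_iff₀ hM] at h9
          linarith
        have hknn : (0:ℝ) ≤ (1 + Real.log (1 + v)) ^ (-(1 + b)) *
            (v ^ y * Real.exp (-v) / (y.factorial : ℝ)) := by positivity
        calc v⁻¹ * (1 + Real.log (1 + v)) ^ (-(1 + b)) *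
            (v ^ y * Real.exp (-v) / (y.factorial : ℝ))
            = v⁻¹ * ((1 + Real.log (1 + v)) ^ (-(1 + b)) *
              (v ^ y * Real.exp (-v) / (y.factorial : ℝ))) := by ring
          _ ≤ (2 * (v ^ (a - 1) * (1 + v) ^ (-a))) * ((1 + Real.log (1 + v)) ^ (-(1 + b)) *
              (v ^ y * Real.exp (-v) / (y.factorial : ℝ))) :=
              mul_le_mul_of_nonneg_right key hknn
          _ = 2 * (gShape0 a b v * (v ^ y * Real.exp (-v) / (y.factorial : ℝ))) := by
              unfold gShape0; ring
          _ ≤ 2 * ((M * p v) * (v ^ y * Real.exp (-v) / (y.factorial : ℝ))) := by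
              refine mul_le_mul_of_nonneg_left (mul_le_mul_of_nonneg_right hgp ?_) (by norm_num)
              positivity
          _ = 2 * M * (p v * (v ^ y * Real.exp (-v) / (y.factorial : ℝ))) := by ring
      have hmono2 : (∫ v in Ioi (1:ℝ), p v * (v ^ y * Real.exp (-v) / (y.factorial : ℝ)))
          ≤ poissonMix p y 0 := by
        rw [hDdef]
        exact setIntegral_mono_set hDint hDnn
          (HasSubset.Subset.eventuallyLE (Ioi_subset_Ioi zero_le_one))
      calc (∫ v in Ioi (1:ℝ), v⁻¹ * (1 + Real.log (1 + v)) ^ (-(1 + b)) *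
          (v ^ y * Real.exp (-v) / (y.factorial : ℝ)))
          ≤ ∫ v in Ioi (1:ℝ), 2 * M * (p v * (v ^ y * Real.exp (-v) / (y.factorial : ℝ))) :=
            setIntegral_mono_on hIoi1 (hDint1.const_mul _) measurableSet_Ioi hpt
        _ = 2 * M * ∫ v in Ioi (1:ℝ), p v * (v ^ y * Real.exp (-v) / (y.factorial : ℝ)) :=
            integral_const_mul _ _
        _ ≤ 2 * M * poissonMix p y 0 := mul_le_mul_of_nonneg_left hmono2 (by positivity)
    exact add_le_add part1 part2
  -- assembling
  rw [div_le_iff₀ hD0]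
  have hyfac : (y.factorial : ℝ)⁻¹ ≤ M * Real.exp 2 / c₀ * poissonMix p y 0 := by
    have e : (y.factorial : ℝ)⁻¹ =
        (c₀ * Real.exp (-2) / (M * (y.factorial : ℝ))) * (M * Real.exp 2 / c₀) := by
      rw [Real.exp_neg]
      field_simp
    rw [e]
    calc (c₀ * Real.exp (-2) / (M * (y.factorial : ℝ))) * (M * Real.exp 2 / c₀)
        ≤ poissonMix p y 0 * (M * Real.exp 2 / c₀) :=
          mul_le_mul_of_nonneg_right hκle (by positivity)
      _ = M * Real.exp 2 / c₀ * poissonMix p y 0 := mul_comm _ _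
  calc poissonMix p y z
      ≤ M * β * ((y.factorial : ℝ)⁻¹ + 2 * M * poissonMix p y 0) :=
        hmain.trans (mul_le_mul_of_nonneg_left hsplit (by positivity))
    _ ≤ M * β * (M * Real.exp 2 / c₀ * poissonMix p y 0 + 2 * M * poissonMix p y 0) := by
        refine mul_le_mul_of_nonneg_left ?_ (by positivity)
        linarith
    _ = M ^ 2 * (Real.exp 2 / c₀ + 2) * β * poissonMix p y 0 := by ring
end
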